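/- arXiv:2208.12478 — 5 statements merged into one kernel-verified Lean document; each statement's English description precedes it below -/
import Mathlib

section
/- The metaplectic cocycle σ: G × G → μ_2 defined by σ(g₁,g₂) = (c(g₁g₂)/c(g₁), (c(g₁g₂)/c(g₂))·det(g₁)), where c((a b; c d)) = c if c ≠ 0 and d otherwise, is trivial when restricted to the subgroup B₂ of upper triangular matrices whose diagonal entries lie in A = p^{2Z}Z_p^×; that is, σ(b₁,b₂) = 1 for all b₁, b₂ ∈ B₂. -/
open scoped Classical

noncomputable def unitPart (p : ℕ) [Fact p.Prime] (x : ℚ_[p]) : ℚ_[p] :=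
  x * (p : ℚ_[p]) ^ (-x.valuation)

noncomputable def omegaVal (p : ℕ) [Fact p.Prime] (x : ℚ_[p]) : ZMod p :=
  if h : ‖unitPart p x‖ ≤ 1 then PadicInt.toZMod (⟨unitPart p x, h⟩ : ℤ_[p]) else 0

/-- The Hilbert symbol `(a,b) = ω((-1)^{v(a)v(b)} b^{v(a)}/a^{v(b)})^{(p-1)/2}`. -/
noncomputable def hilbertFormula (p : ℕ) [Fact p.Prime] (a b : ℚ_[p]) : ZMod p :=
  omegaVal p ((-1 : ℚ_[p]) ^ (a.valuation * b.valuation) * b ^ a.valuation / a ^ b.valuation) ^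
    ((p - 1) / 2)

/-- The function `𝔠 : GL₂(ℚ_p) → ℚ_p^×`, `𝔠 (a b; c d) = c` if `c ≠ 0` and `= d` otherwise. -/
noncomputable def cfun (p : ℕ) [Fact p.Prime] (g : Matrix (Fin 2) (Fin 2) ℚ_[p]) : ℚ_[p] :=
  if g 1 0 ≠ 0 then g 1 0 else g 1 1

/-- The metaplectic cocycle
`σ(g₁,g₂) = (𝔠(g₁g₂)/𝔠(g₁), (𝔠(g₁g₂)/𝔠(g₂))·det(g₁))` valued in `μ₂ ⊆ F_p^×`. -/
noncomputable def metaCocycle (p : ℕ) [Fact p.Prime]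
    (g₁ g₂ : Matrix (Fin 2) (Fin 2) ℚ_[p]) : ZMod p :=
  hilbertFormula p (cfun p (g₁ * g₂) / cfun p g₁)
    (cfun p (g₁ * g₂) / cfun p g₂ * g₁.det)

section Aux

variable (p : ℕ) [Fact p.Prime]

/-- Helper constructor for `ℤ_[p]`. -/
def pmk (x : ℚ_[p]) (h : ‖x‖ ≤ 1) : ℤ_[p] := ⟨x, h⟩

lemma val_inv (x : ℚ_[p]) (hx : x ≠ 0) : (x⁻¹).valuation = -x.valuation := by
  have h := Padic.valuation_mul (p := p) hx (inv_ne_zero hx)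
  rw [mul_inv_cancel₀ hx, Padic.valuation_one] at h
  linarith

lemma val_div (x y : ℚ_[p]) (hx : x ≠ 0) (hy : y ≠ 0) :
    (x / y).valuation = x.valuation - y.valuation := by
  rw [div_eq_mul_inv, Padic.valuation_mul hx (inv_ne_zero hy), val_inv p y hy]
  ring

lemma omega_unit_sq (u : ℚ_[p]) (hu : u ≠ 0) (hv : u.valuation = 0) (hp : Odd p) :
    omegaVal p (u * u) ^ ((p - 1) / 2) = 1 := by
  have huu : u * u ≠ 0 := mul_ne_zero hu hu
  have hvuu : (u * u).valuation = 0 := by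
    rw [Padic.valuation_mul hu hu, hv]; ring
  have hnorm : ‖u‖ = 1 := by
    rw [Padic.norm_eq_zpow_neg_valuation hu, hv]; simp
  have hle : ‖u‖ ≤ 1 := hnorm.le
  have hle2 : ‖u * u‖ ≤ 1 := by rw [norm_mul, hnorm]; norm_num
  have hup : unitPart p (u * u) = u * u := by
    rw [unitPart, hvuu]; simp
  have homega : omegaVal p (u * u) =
      PadicInt.toZMod (pmk p u hle) * PadicInt.toZMod (pmk p u hle) := by
    rw [omegaVal]
    have h' : ‖unitPart p (u * u)‖ ≤ 1 := by rw [hup]; exact hle2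
    rw [dif_pos h']
    have : (⟨unitPart p (u * u), h'⟩ : ℤ_[p]) = pmk p u hle * pmk p u hle :=
      Subtype.ext (by simp [hup, pmk]; rfl)
    rw [this, map_mul]
  set t := PadicInt.toZMod (pmk p u hle) with ht
  have htne : t ≠ 0 := by
    intro h0
    have hmem : pmk p u hle ∈ IsLocalRing.maximalIdeal ℤ_[p] := by
      rw [← PadicInt.ker_toZMod]; exact h0
    rw [PadicInt.maximalIdeal_eq_span_p, Ideal.mem_span_singleton,
      ← PadicInt.norm_lt_one_iff_dvd] at hmem
    have hcoe : ‖pmk p u hle‖ = ‖u‖ := rfl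
    rw [hcoe, hnorm] at hmem
    exact absurd hmem (by norm_num)
  have hpodd : 2 * ((p - 1) / 2) = p - 1 := by
    obtain ⟨k, hk⟩ := hp
    omega
  rw [homega, ← sq, ← pow_mul, hpodd]
  exact ZMod.pow_card_sub_one_eq_one htne

lemma hilbert_even (x y : ℚ_[p]) (hp : Odd p) (hx : x ≠ 0) (hy : y ≠ 0)
    (hvx : Even x.valuation) (hvy : Even y.valuation) : hilbertFormula p x y = 1 := by
  obtain ⟨m, hm⟩ := hvx
  obtain ⟨n, hn⟩ := hvy
  have h1 : ((-1 : ℚ_[p])) ^ (x.valuation * y.valuation) = 1 := by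
    exact Even.neg_one_zpow (by exact ⟨m * y.valuation, by rw [hm]; ring⟩)
  have hyx : y ^ x.valuation = y ^ m * y ^ m := by
    rw [hm, zpow_add₀ hy]
  have hxy : x ^ y.valuation = x ^ n * x ^ n := by
    rw [hn, zpow_add₀ hx]
  set u : ℚ_[p] := y ^ m / x ^ n with hu
  have hxn : (x : ℚ_[p]) ^ n ≠ 0 := zpow_ne_zero _ hx
  have hym : (y : ℚ_[p]) ^ m ≠ 0 := zpow_ne_zero _ hy
  have hune : u ≠ 0 := div_ne_zero hym hxn
  have hvzpow : ∀ (z : ℚ_[p]) (k : ℤ), z ≠ 0 → (z ^ k).valuation = k * z.valuation := by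
    intro z k hz
    induction k using Int.induction_on with
    | zero => simp [Padic.valuation_one]
    | succ i ih =>
        rw [zpow_add₀ hz, Padic.valuation_mul (zpow_ne_zero _ hz) (by simpa using hz), ih]
        simp only [zpow_one]; ring
    | pred i ih =>
        rw [sub_eq_add_neg, zpow_add₀ hz,
          Padic.valuation_mul (zpow_ne_zero _ hz) (zpow_ne_zero _ hz), ih,
          zpow_neg, zpow_one, val_inv p z hz]
        ring
  have hvu : u.valuation = 0 := by
    rw [hu, val_div p _ _ hym hxn, hvzpow y m hy, hvzpow x n hx, hm, hn]
    ring
  have harg : (-1 : ℚ_[p]) ^ (x.valuation * y.valuation) * y ^ x.valuation / x ^ y.valuation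
      = u * u := by
    rw [h1, one_mul, hyx, hxy, hu]
    field_simp
  rw [hilbertFormula, harg]
  exact omega_unit_sq p u hune hvu hp

end Aux

/-- The metaplectic cocycle `σ` is trivial on the subgroup `B₂` of upper triangular matrices
whose diagonal entries lie in `A = p^{2ℤ}ℤ_p^×`: `σ(b₁,b₂) = 1` for all `b₁, b₂ ∈ B₂`. -/
theorem statement2 (p : ℕ) [Fact p.Prime] (hp : Odd p)
    (b₁ b₂ : Matrix (Fin 2) (Fin 2) ℚ_[p])
    (hlow₁ : b₁ 1 0 = 0) (hlow₂ : b₂ 1 0 = 0)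
    (ha₁ : b₁ 0 0 ≠ 0) (hd₁ : b₁ 1 1 ≠ 0) (ha₂ : b₂ 0 0 ≠ 0) (hd₂ : b₂ 1 1 ≠ 0)
    (hva₁ : Even (b₁ 0 0).valuation) (hvd₁ : Even (b₁ 1 1).valuation)
    (hva₂ : Even (b₂ 0 0).valuation) (hvd₂ : Even (b₂ 1 1).valuation) :
    metaCocycle p b₁ b₂ = 1 := by
  have hmul10 : (b₁ * b₂) 1 0 = 0 := by
    rw [Matrix.mul_apply]
    simp [Fin.sum_univ_two, hlow₁, hlow₂]
  have hmul11 : (b₁ * b₂) 1 1 = b₁ 1 1 * b₂ 1 1 := by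
    rw [Matrix.mul_apply]
    simp [Fin.sum_univ_two, hlow₁]
  have hc12 : cfun p (b₁ * b₂) = b₁ 1 1 * b₂ 1 1 := by
    rw [cfun, hmul10, hmul11]; simp
  have hc1 : cfun p b₁ = b₁ 1 1 := by rw [cfun, hlow₁]; simp
  have hc2 : cfun p b₂ = b₂ 1 1 := by rw [cfun, hlow₂]; simp
  have hdet : b₁.det = b₁ 0 0 * b₁ 1 1 := by
    rw [Matrix.det_fin_two, hlow₁]; ring
  rw [metaCocycle, hc12, hc1, hc2, hdet]
  have e1 : b₁ 1 1 * b₂ 1 1 / b₁ 1 1 = b₂ 1 1 := by field_simp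
  have e2 : b₁ 1 1 * b₂ 1 1 / b₂ 1 1 * (b₁ 0 0 * b₁ 1 1)
      = b₁ 0 0 * (b₁ 1 1 * b₁ 1 1) := by field_simp
  rw [e1, e2]
  apply hilbert_even p _ _ hp hd₂ (mul_ne_zero ha₁ (mul_ne_zero hd₁ hd₁)) hvd₂
  rw [Padic.valuation_mul ha₁ (mul_ne_zero hd₁ hd₁),
    Padic.valuation_mul hd₁ hd₁]
  obtain ⟨k, hk⟩ := hva₁
  exact ⟨k + (b₁ 1 1).valuation, by rw [hk]; ring⟩
end

section
/- The center of the metaplectic cover T̃ of the diagonal torus T of GL₂(Q_p) is exactly T^sq × μ_2, where T^sq is the subgroup of squares in T. The center of G̃ is Z^sq × μ_2, where Z^sq is the group of scalar matrices with square entries. -/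
open scoped Classical

section aux
variable {p : ℕ} [Fact p.Prime]

lemma norm_unitPart {x : ℚ_[p]} (hx : x ≠ 0) : ‖unitPart p x‖ = 1 := by
  have hp0 : (p : ℝ) ≠ 0 := by exact_mod_cast (Fact.out : p.Prime).ne_zero
  rw [unitPart, norm_mul, Padic.norm_eq_zpow_neg_valuation hx, norm_zpow, Padic.norm_p, inv_zpow,
    ← zpow_neg, neg_neg, ← zpow_add₀ hp0]
  simp

lemma unitPart_ne_zero {x : ℚ_[p]} (hx : x ≠ 0) : unitPart p x ≠ 0 := by
  intro h
  have h1 := norm_unitPart hx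
  rw [h, norm_zero] at h1
  exact zero_ne_one h1

lemma unitPart_mul {x y : ℚ_[p]} (hx : x ≠ 0) (hy : y ≠ 0) :
    unitPart p (x * y) = unitPart p x * unitPart p y := by
  have hp0 : (p : ℚ_[p]) ≠ 0 := by
    exact_mod_cast (Nat.cast_ne_zero.mpr (Fact.out : p.Prime).ne_zero)
  simp only [unitPart, Padic.valuation_mul hx hy, neg_add, zpow_add₀ hp0]
  ring

lemma toZMod_ne_zero_of_norm_one {z : ℤ_[p]} (h1 : ‖z‖ = 1) : PadicInt.toZMod z ≠ 0 := by
  intro h0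
  have hz : z ∈ RingHom.ker (PadicInt.toZMod (p := p)) := h0
  rw [PadicInt.ker_toZMod] at hz
  have := PadicInt.not_isUnit_iff.mp (mem_nonunits_iff.mp ((IsLocalRing.mem_maximalIdeal z).mp hz))
  rw [h1] at this
  exact lt_irrefl _ this

lemma omegaVal_eq {x : ℚ_[p]} (hx : x ≠ 0) :
    omegaVal p x = PadicInt.toZMod (⟨unitPart p x, le_of_eq (norm_unitPart hx)⟩ : ℤ_[p]) := by
  rw [omegaVal, dif_pos (le_of_eq (norm_unitPart hx))]

lemma omegaVal_ne_zero {x : ℚ_[p]} (hx : x ≠ 0) : omegaVal p x ≠ 0 := by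
  rw [omegaVal_eq hx]
  exact toZMod_ne_zero_of_norm_one (norm_unitPart hx)

lemma omegaVal_zero : omegaVal p 0 = 0 := by
  simp [omegaVal, unitPart]

lemma omegaVal_mul (x y : ℚ_[p]) :
    omegaVal p (x * y) = omegaVal p x * omegaVal p y := by
  by_cases hx : x = 0
  · simp [hx, omegaVal_zero]
  by_cases hy : y = 0
  · simp [hy, omegaVal_zero]
  rw [omegaVal_eq (mul_ne_zero hx hy), omegaVal_eq hx, omegaVal_eq hy]
  exact (congrArg PadicInt.toZMod (PadicInt.ext (unitPart_mul hx hy))).trans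
    (map_mul _ _ _)

lemma omegaVal_one : omegaVal p 1 = 1 := by
  have hne : omegaVal p 1 ≠ 0 := omegaVal_ne_zero one_ne_zero
  have h := omegaVal_mul (p := p) 1 1
  rw [mul_one] at h
  exact (mul_left_cancel₀ hne (by rw [← h, mul_one])).symm

/-- `omegaVal` as a monoid-with-zero hom. -/
noncomputable def omegaHom (p : ℕ) [Fact p.Prime] : ℚ_[p] →*₀ ZMod p where
  toFun := omegaVal p
  map_zero' := omegaVal_zero
  map_one' := omegaVal_one
  map_mul' := omegaVal_mul

lemma omegaVal_zpow (x : ℚ_[p]) (n : ℤ) : omegaVal p (x ^ n) = omegaVal p x ^ n :=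
  map_zpow₀ (omegaHom p) x n

lemma omegaVal_div (x y : ℚ_[p]) : omegaVal p (x / y) = omegaVal p x / omegaVal p y :=
  map_div₀ (omegaHom p) x y

end aux

/-- The Hilbert symbol viewed with values in `μ₂ = {±1} ⊆ ℤˣ`. -/
noncomputable def hilbertSign (p : ℕ) [Fact p.Prime] (a b : ℚ_[p]) : ℤˣ :=
  if hilbertFormula p a b = 1 then 1 else -1

section hfsec
variable {p : ℕ} [Fact p.Prime]

lemma zpow_pow_swap (x : ZMod p) (n : ℤ) (k : ℕ) : (x ^ n) ^ k = (x ^ k) ^ n := by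
  rw [← zpow_natCast (x ^ n) k, ← zpow_mul, mul_comm, zpow_mul, zpow_natCast]

lemma hf_eval {a b : ℚ_[p]} :
    hilbertFormula p a b =
      ((omegaVal p (-1)) ^ ((p - 1) / 2)) ^ (a.valuation * b.valuation) *
        ((omegaVal p b) ^ ((p - 1) / 2)) ^ a.valuation /
          ((omegaVal p a) ^ ((p - 1) / 2)) ^ b.valuation := by
  rw [hilbertFormula, omegaVal_div, omegaVal_mul, omegaVal_zpow, omegaVal_zpow, omegaVal_zpow,
    div_pow, mul_pow, zpow_pow_swap, zpow_pow_swap, zpow_pow_swap]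

/-- χ(x) := ω(x)^((p-1)/2) squares to 1. -/
lemma chi_mul_self (hp : Odd p) {x : ℚ_[p]} (hx : x ≠ 0) :
    omegaVal p x ^ ((p - 1) / 2) * omegaVal p x ^ ((p - 1) / 2) = 1 := by
  rw [← pow_add]
  have h : (p - 1) / 2 + (p - 1) / 2 = p - 1 := by
    obtain ⟨k, hk⟩ := hp; omega
  rw [h]
  exact ZMod.pow_card_sub_one_eq_one (omegaVal_ne_zero hx)

lemma sq_one_zpow {x : ZMod p} (h : x * x = 1) (n : ℤ) : x ^ n * x ^ n = 1 := by
  have hx0 : x ≠ 0 := fun h0 => by simp [h0] at h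
  rw [← zpow_add₀ hx0, ← two_mul, zpow_mul, zpow_two, h, one_zpow]

lemma sq_one_zpow_even {x : ZMod p} (h : x * x = 1) {n : ℤ} (hn : Even n) : x ^ n = 1 := by
  obtain ⟨m, rfl⟩ := hn
  have hx0 : x ≠ 0 := fun h0 => by simp [h0] at h
  rw [zpow_add₀ hx0]
  exact sq_one_zpow h m

lemma chi_sq_arg (hp : Odd p) {u : ℚ_[p]} (hu : u ≠ 0) :
    omegaVal p (u ^ 2) ^ ((p - 1) / 2) = 1 := by
  rw [sq, omegaVal_mul, mul_pow]
  exact chi_mul_self hp hu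

lemma val_sq {u : ℚ_[p]} (hu : u ≠ 0) :
    (u ^ 2).valuation = u.valuation + u.valuation := by
  rw [sq, Padic.valuation_mul hu hu]

lemma hf_sq_right (hp : Odd p) {a u : ℚ_[p]} (ha : a ≠ 0) (hu : u ≠ 0) :
    hilbertFormula p a (u ^ 2) = 1 := by
  rw [hf_eval, val_sq hu, chi_sq_arg hp hu, one_zpow,
    sq_one_zpow_even (chi_mul_self hp (by norm_num : (-1 : ℚ_[p]) ≠ 0))
      ⟨a.valuation * u.valuation, by ring⟩,
    sq_one_zpow_even (chi_mul_self hp ha) ⟨u.valuation, rfl⟩]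
  norm_num

lemma hf_sq_left (hp : Odd p) {u b : ℚ_[p]} (hu : u ≠ 0) (hb : b ≠ 0) :
    hilbertFormula p (u ^ 2) b = 1 := by
  rw [hf_eval, val_sq hu, chi_sq_arg hp hu, one_zpow,
    sq_one_zpow_even (chi_mul_self hp (by norm_num : (-1 : ℚ_[p]) ≠ 0))
      ⟨u.valuation * b.valuation, by ring⟩,
    sq_one_zpow_even (chi_mul_self hp hb) ⟨u.valuation, rfl⟩]
  norm_num

lemma hf_ne_zero {a b : ℚ_[p]} (ha : a ≠ 0) (hb : b ≠ 0) : hilbertFormula p a b ≠ 0 := by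
  rw [hf_eval]
  have h1 : omegaVal p (-1 : ℚ_[p]) ≠ 0 := omegaVal_ne_zero (by norm_num)
  have hb' : omegaVal p b ≠ 0 := omegaVal_ne_zero hb
  have ha' : omegaVal p a ≠ 0 := omegaVal_ne_zero ha
  exact div_ne_zero (mul_ne_zero (zpow_ne_zero _ (pow_ne_zero _ h1))
    (zpow_ne_zero _ (pow_ne_zero _ hb'))) (zpow_ne_zero _ (pow_ne_zero _ ha'))

lemma hf_mul_self (hp : Odd p) {a b : ℚ_[p]} (ha : a ≠ 0) (hb : b ≠ 0) :
    hilbertFormula p a b * hilbertFormula p a b = 1 := by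
  have h1 := chi_mul_self hp (by norm_num : (-1 : ℚ_[p]) ≠ 0)
  have hbb := chi_mul_self hp hb
  have haa := chi_mul_self hp ha
  have ha0 : ((omegaVal p a) ^ ((p - 1) / 2)) ^ b.valuation ≠ 0 :=
    zpow_ne_zero _ (pow_ne_zero _ (omegaVal_ne_zero ha))
  rw [hf_eval, div_mul_div_comm, div_eq_one_iff_eq (mul_ne_zero ha0 ha0)]
  rw [mul_mul_mul_comm, sq_one_zpow h1, one_mul, sq_one_zpow hbb, sq_one_zpow haa]

lemma hf_symm (hp : Odd p) {a b : ℚ_[p]} (ha : a ≠ 0) (hb : b ≠ 0) :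
    hilbertFormula p a b = hilbertFormula p b a := by
  have key : hilbertFormula p a b * hilbertFormula p b a = 1 := by
    have h1 := chi_mul_self hp (by norm_num : (-1 : ℚ_[p]) ≠ 0)
    have ha0 : ((omegaVal p a) ^ ((p - 1) / 2)) ^ b.valuation ≠ 0 :=
      zpow_ne_zero _ (pow_ne_zero _ (omegaVal_ne_zero ha))
    have hb0 : ((omegaVal p b) ^ ((p - 1) / 2)) ^ a.valuation ≠ 0 :=
      zpow_ne_zero _ (pow_ne_zero _ (omegaVal_ne_zero hb))
    rw [hf_eval, hf_eval (a := b), div_mul_div_comm,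
      div_eq_one_iff_eq (mul_ne_zero ha0 hb0)]
    rw [mul_mul_mul_comm, mul_comm b.valuation a.valuation, sq_one_zpow h1, one_mul]
    exact mul_comm _ _
  have h2 := hf_mul_self hp hb ha
  exact mul_right_cancel₀ (hf_ne_zero hb ha) (key.trans h2.symm)

end hfsec

section forces
variable {p : ℕ} [Fact p.Prime]

lemma padic_val_zero_of_norm_one {x : ℚ_[p]} (hx : x ≠ 0) (h : ‖x‖ = 1) :
    x.valuation = 0 := by
  have hp1 : (1 : ℝ) < p := by exact_mod_cast (Fact.out : p.Prime).one_lt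
  have h2 := Padic.norm_eq_zpow_neg_valuation hx
  rw [h] at h2
  have h3 : (p : ℝ) ^ (0 : ℤ) = (p : ℝ) ^ (-x.valuation) := by rw [zpow_zero]; exact h2
  have := zpow_right_injective₀ (by linarith : (0:ℝ) < p) (by linarith) h3
  omega

lemma norm_one_of_toZMod_ne_zero {z : ℤ_[p]} (h : PadicInt.toZMod z ≠ 0) : ‖z‖ = 1 := by
  refine le_antisymm (PadicInt.norm_le_one z) (not_lt.mp fun hlt => h ?_)
  have hz : z ∈ IsLocalRing.maximalIdeal ℤ_[p] :=
    (IsLocalRing.mem_maximalIdeal z).mpr (mem_nonunits_iff.mpr (PadicInt.not_isUnit_iff.mpr hlt))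
  rw [← PadicInt.ker_toZMod] at hz
  exact hz

lemma norm_lt_one_of_toZMod_eq_zero {z : ℤ_[p]} (h : PadicInt.toZMod z = 0) : ‖z‖ < 1 := by
  have hz : z ∈ RingHom.ker (PadicInt.toZMod (p := p)) := h
  rw [PadicInt.ker_toZMod] at hz
  exact PadicInt.not_isUnit_iff.mp (mem_nonunits_iff.mp ((IsLocalRing.mem_maximalIdeal z).mp hz))

lemma omegaVal_coe_of_norm_one {z : ℤ_[p]} (h : ‖z‖ = 1) :
    omegaVal p ((z : ℚ_[p])) = PadicInt.toZMod z := by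
  have hz0 : (z : ℚ_[p]) ≠ 0 := by
    rw [PadicInt.coe_ne_zero]
    intro h0
    rw [h0, norm_zero] at h
    exact zero_ne_one h
  have hval : (z : ℚ_[p]).valuation = 0 :=
    padic_val_zero_of_norm_one hz0 (by rw [← PadicInt.norm_def]; exact h)
  have hunit : unitPart p ((z : ℚ_[p])) = (z : ℚ_[p]) := by
    rw [unitPart, hval, neg_zero, zpow_zero, mul_one]
  rw [omegaVal_eq hz0]
  congr 1
  exact Subtype.ext (by simpa using hunit)

/-- `p`-adic squares: if the unit part reduces to a square mod `p`, then `a` with even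
valuation is a square. -/
lemma exists_sq_of_forall_hf (hp : Odd p) {a : ℚ_[p]} (ha : a ≠ 0)
    (H : ∀ b : ℚ_[p], b ≠ 0 → hilbertFormula p a b = 1) :
    ∃ u : ℚ_[p], u ≠ 0 ∧ a = u ^ 2 := by
  have hprime : p.Prime := Fact.out
  have hp2 : p ≠ 2 := by rintro rfl; exact (by norm_num : ¬ Odd 2) hp
  have hkey : (p - 1) / 2 = p / 2 := by
    obtain ⟨k, hk⟩ := hp; omega
  -- a nonsquare in ZMod p
  obtain ⟨n0, hn0⟩ := FiniteField.exists_nonsquare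
    (F := ZMod p) (by rw [ZMod.ringChar_zmod_n]; exact hp2)
  have hn0ne : n0 ≠ 0 := fun h => hn0 (h ▸ ⟨0, by norm_num⟩)
  -- the corresponding unit ε in ℚ_p
  haveI : NeZero p := ⟨hprime.ne_zero⟩
  set z : ℤ_[p] := (n0.val : ℤ_[p]) with hz
  have hzred : PadicInt.toZMod z = n0 := by
    rw [hz, map_natCast, ZMod.natCast_zmod_val]
  have hznorm : ‖z‖ = 1 := norm_one_of_toZMod_ne_zero (by rw [hzred]; exact hn0ne)
  set ε : ℚ_[p] := (z : ℚ_[p]) with hε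
  have hεne : ε ≠ 0 := by
    rw [hε, PadicInt.coe_ne_zero]
    intro h0; rw [h0, norm_zero] at hznorm; exact zero_ne_one hznorm
  have hεval : ε.valuation = 0 :=
    padic_val_zero_of_norm_one hεne (by rw [hε, ← PadicInt.norm_def]; exact hznorm)
  have hωε : omegaVal p ε = n0 := by rw [hε, omegaVal_coe_of_norm_one hznorm, hzred]
  -- χ(ε) = -1
  have hchiε : omegaVal p ε ^ ((p - 1) / 2) = -1 := by
    have hsq := chi_mul_self hp hεne
    rcases mul_self_eq_one_iff.mp hsq with h1 | h1
    · exfalso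
      apply hn0
      rw [← hωε]
      exact (ZMod.euler_criterion p (by rw [hωε]; exact hn0ne)).mpr (by rw [← hkey]; exact h1)
    · exact h1
  -- step 1: the valuation of a is even
  have heval : Even a.valuation := by
    have h1 := H ε hεne
    rw [hf_eval, hεval, mul_zero, zpow_zero, one_mul, zpow_zero, div_one, hchiε] at h1
    by_contra hodd
    rw [Int.not_even_iff_odd] at hodd
    rw [hodd.neg_one_zpow] at h1
    have : (2 : ZMod p) = 0 := by linear_combination -h1
    rw [show ((2 : ZMod p)) = ((2 : ℕ) : ZMod p) by norm_num,
      ZMod.natCast_eq_zero_iff] at this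
    exact hp2 ((Nat.prime_dvd_prime_iff_eq hprime Nat.prime_two).mp this)
  -- step 2: χ(a) = 1, so the unit part of a is a square mod p
  have hpne : (p : ℚ_[p]) ≠ 0 := Nat.cast_ne_zero.mpr hprime.ne_zero
  have hchia : omegaVal p a ^ ((p - 1) / 2) = 1 := by
    have h2 := H p hpne
    rw [hf_eval, Padic.valuation_p, mul_one, zpow_one,
      sq_one_zpow_even (chi_mul_self hp (by norm_num : (-1 : ℚ_[p]) ≠ 0)) heval,
      sq_one_zpow_even (chi_mul_self hp hpne) heval, one_mul] at h2
    rwa [div_eq_one_iff_eq (pow_ne_zero _ (omegaVal_ne_zero ha)), eq_comm] at h2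
  have hsqmod : IsSquare (omegaVal p a) :=
    (ZMod.euler_criterion p (omegaVal_ne_zero ha)).mpr (by rw [← hkey]; exact hchia)
  -- step 3: Hensel lifting of the square root of the unit part
  obtain ⟨s, hs⟩ := hsqmod
  have hsne : s ≠ 0 := by
    intro h0; rw [h0, mul_zero] at hs; exact omegaVal_ne_zero ha hs
  set a₀ : ℤ_[p] := (s.val : ℤ_[p]) with ha₀
  have ha₀red : PadicInt.toZMod a₀ = s := by rw [ha₀, map_natCast, ZMod.natCast_zmod_val]
  have ha₀norm : ‖a₀‖ = 1 := norm_one_of_toZMod_ne_zero (by rw [ha₀red]; exact hsne)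
  set t : ℤ_[p] := ⟨unitPart p a, le_of_eq (norm_unitPart ha)⟩ with ht
  have htred : PadicInt.toZMod t = omegaVal p a := (omegaVal_eq ha).symm
  set F : Polynomial ℤ_[p] := Polynomial.X ^ 2 - Polynomial.C t with hF
  have hFeval : ∀ w : ℤ_[p], F.eval w = w ^ 2 - t := by intro w; simp [hF]
  have hFderiv : F.derivative = Polynomial.C 2 * Polynomial.X := by
    rw [hF]; simp [Polynomial.derivative_X_pow]; rw [one_add_one_eq_two, Polynomial.C_ofNat]
  have hder : ‖F.derivative.eval a₀‖ = 1 := by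
    rw [hFderiv]
    simp only [Polynomial.eval_mul, Polynomial.eval_C, Polynomial.eval_X]
    rw [norm_mul, ha₀norm, mul_one]
    apply norm_one_of_toZMod_ne_zero
    rw [show ((2 : ℤ_[p])) = ((2 : ℕ) : ℤ_[p]) by norm_num, map_natCast]
    intro h2
    rw [ZMod.natCast_eq_zero_iff] at h2
    exact hp2 ((Nat.prime_dvd_prime_iff_eq hprime Nat.prime_two).mp h2)
  have heval_lt : ‖F.eval a₀‖ < 1 := by
    rw [hFeval]
    apply norm_lt_one_of_toZMod_eq_zero
    rw [map_sub, map_pow, ha₀red, htred, sq, ← hs, sub_self]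
  obtain ⟨w, hw, -, -, -⟩ := hensels_lemma (F := F) (a := a₀)
    (by rw [Polynomial.coe_aeval_eq_eval, hder, one_pow]; exact heval_lt)
  have hw2 : w ^ 2 = t := by
    have h := hFeval w
    rw [← Polynomial.coe_aeval_eq_eval, hw] at h
    exact sub_eq_zero.mp h.symm
  have htne : t ≠ 0 := by
    intro h0
    have : unitPart p a = 0 := congrArg Subtype.val h0
    exact unitPart_ne_zero ha this
  have hwne : w ≠ 0 := by
    intro h0; rw [h0] at hw2; simp at hw2; exact htne hw2.symm
  obtain ⟨m, hm⟩ := heval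
  refine ⟨(w : ℚ_[p]) * (p : ℚ_[p]) ^ m, mul_ne_zero ((PadicInt.coe_ne_zero (x := w)).mpr hwne)
    (zpow_ne_zero _ hpne), ?_⟩
  have hcoe : ((w : ℚ_[p])) ^ 2 = unitPart p a := by
    rw [← PadicInt.coe_pow, hw2]
  have key : unitPart p a * (p : ℚ_[p]) ^ (a.valuation) = a := by
    rw [unitPart, mul_assoc, ← zpow_add₀ hpne]
    simp
  have h2 : ((p : ℚ_[p]) ^ m) ^ 2 = (p : ℚ_[p]) ^ (m + m) := by
    rw [pow_two, ← zpow_add₀ hpne]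
  rw [mul_pow, hcoe, h2, ← hm]
  exact key.symm
end forces

/-- The metaplectic cocycle, valued in `μ₂ = {±1} ⊆ ℤˣ`. -/
noncomputable def metaCocycleSign (p : ℕ) [Fact p.Prime]
    (g₁ g₂ : Matrix (Fin 2) (Fin 2) ℚ_[p]) : ℤˣ :=
  hilbertSign p (cfun p (g₁ * g₂) / cfun p g₁)
    (cfun p (g₁ * g₂) / cfun p g₂ * g₁.det)

/-- Multiplication in the metaplectic cover `G̃ = G × μ₂`:
`(g₁,ζ₁)(g₂,ζ₂) = (g₁g₂, ζ₁ζ₂σ(g₁,g₂))`. -/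
noncomputable def metaMul (p : ℕ) [Fact p.Prime]
    (x y : Matrix (Fin 2) (Fin 2) ℚ_[p] × ℤˣ) : Matrix (Fin 2) (Fin 2) ℚ_[p] × ℤˣ :=
  (x.1 * y.1, x.2 * y.2 * metaCocycleSign p x.1 y.1)

section signs
variable {p : ℕ} [Fact p.Prime]

lemma hs_eq_one_iff {a b : ℚ_[p]} : hilbertSign p a b = 1 ↔ hilbertFormula p a b = 1 := by
  by_cases h : hilbertFormula p a b = 1
  · simp [hilbertSign, h]
  · simp [hilbertSign, h]

lemma hf_one_right {a : ℚ_[p]} : hilbertFormula p a 1 = 1 := by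
  rw [hilbertFormula, Padic.valuation_one]
  simp [omegaVal_one]

lemma hf_one_left {b : ℚ_[p]} : hilbertFormula p 1 b = 1 := by
  rw [hilbertFormula, Padic.valuation_one]
  simp [omegaVal_one]

lemma hs_sq_right (hp : Odd p) {a u : ℚ_[p]} (ha : a ≠ 0) (hu : u ≠ 0) :
    hilbertSign p a (u ^ 2) = 1 :=
  hs_eq_one_iff.mpr (hf_sq_right hp ha hu)

lemma hs_sq_left (hp : Odd p) {u b : ℚ_[p]} (hu : u ≠ 0) (hb : b ≠ 0) :
    hilbertSign p (u ^ 2) b = 1 :=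
  hs_eq_one_iff.mpr (hf_sq_left hp hu hb)

lemma metaMul_comm_iff {g g' : Matrix (Fin 2) (Fin 2) ℚ_[p]} {ζ ζ' : ℤˣ} :
    metaMul p (g, ζ) (g', ζ') = metaMul p (g', ζ') (g, ζ) ↔
      (g * g' = g' * g ∧ metaCocycleSign p g g' = metaCocycleSign p g' g) := by
  rw [metaMul, metaMul, Prod.mk.injEq]
  dsimp only
  constructor
  · rintro ⟨h1, h2⟩
    refine ⟨h1, ?_⟩
    rw [mul_comm ζ' ζ] at h2
    exact mul_left_cancel h2
  · rintro ⟨h1, h2⟩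
    exact ⟨h1, by rw [h2, mul_comm ζ ζ']⟩

lemma cfun_diag (x y : ℚ_[p]) : cfun p !![x, 0; 0, y] = y := by
  simp [cfun]

lemma diag_mul (x y x' y' : ℚ_[p]) :
    !![x, 0; 0, y] * !![x', 0; 0, y'] = !![x * x', 0; 0, y * y'] := by
  rw [Matrix.mul_fin_two]
  norm_num

lemma cfun_ne_zero {g : Matrix (Fin 2) (Fin 2) ℚ_[p]} (h : g.det ≠ 0) : cfun p g ≠ 0 := by
  rw [cfun]
  split_ifs with h10
  · exact h10
  · push_neg at h10
    intro h11
    apply h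
    rw [Matrix.det_fin_two, h10, h11]
    ring

lemma cfun_one : cfun p (1 : Matrix (Fin 2) (Fin 2) ℚ_[p]) = 1 := by
  simp [cfun, Matrix.one_apply]

lemma cfun_smul {c : ℚ_[p]} (hc : c ≠ 0) (g : Matrix (Fin 2) (Fin 2) ℚ_[p]) :
    cfun p (c • g) = c * cfun p g := by
  have h10 : (c • g) 1 0 = c * g 1 0 := by simp
  have h11 : (c • g) 1 1 = c * g 1 1 := by simp
  rw [cfun, cfun, h10, h11]
  by_cases hg : g 1 0 = 0
  · rw [hg, mul_zero]
    simp
  · rw [if_pos (by exact mul_ne_zero hc hg), if_pos hg]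

lemma cocycle_diag {x y x' y' : ℚ_[p]} (hy : y ≠ 0) (hy' : y' ≠ 0) :
    metaCocycleSign p !![x, 0; 0, y] !![x', 0; 0, y'] = hilbertSign p y' (y * (x * y)) := by
  rw [metaCocycleSign, diag_mul, cfun_diag, cfun_diag, cfun_diag, Matrix.det_fin_two_of,
    mul_div_cancel_left₀ _ hy, mul_div_cancel_right₀ _ hy']
  congr 1
  ring

lemma cocycle_scalar_left {c : ℚ_[p]} (hc : c ≠ 0) {g' : Matrix (Fin 2) (Fin 2) ℚ_[p]}
    (hg' : g'.det ≠ 0) :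
    metaCocycleSign p (c • 1) g' = hilbertSign p (cfun p g') (c * (c * c)) := by
  have h1 : (c • (1 : Matrix (Fin 2) (Fin 2) ℚ_[p])) * g' = c • g' := by
    rw [smul_mul_assoc, one_mul]
  rw [metaCocycleSign, h1, cfun_smul hc, cfun_smul hc, cfun_one, mul_one,
    Matrix.det_smul, Matrix.det_one, mul_div_cancel_left₀ _ hc,
    mul_div_cancel_right₀ _ (cfun_ne_zero hg')]
  congr 1
  rw [Fintype.card_fin]
  ring

lemma cocycle_scalar_right {c : ℚ_[p]} (hc : c ≠ 0) {g' : Matrix (Fin 2) (Fin 2) ℚ_[p]}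
    (hg' : g'.det ≠ 0) :
    metaCocycleSign p g' (c • 1) = hilbertSign p c (cfun p g' * g'.det) := by
  have h1 : g' * (c • (1 : Matrix (Fin 2) (Fin 2) ℚ_[p])) = c • g' := by
    rw [mul_smul_comm, mul_one]
  rw [metaCocycleSign, h1, cfun_smul hc, cfun_smul hc, cfun_one, mul_one,
    mul_div_cancel_right₀ _ (cfun_ne_zero hg'), mul_div_cancel_left₀ _ hc]

end signs

/-- The center of the metaplectic cover `T̃` of the diagonal torus is `T^sq × μ₂`, and the
center of `G̃` is `Z^sq × μ₂`: an element `(diag(x,y),ζ)` of `T̃` commutes with all elements of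
`T̃` iff `x` and `y` are squares in `ℚ_p^×`, and an element `(g,ζ)` of `G̃` commutes with all
elements of `G̃` iff `g` is a scalar matrix with square entry. -/
theorem statement4 (p : ℕ) [Fact p.Prime] (hp : Odd p) :
    (∀ (x y : ℚ_[p]) (ζ : ℤˣ), x ≠ 0 → y ≠ 0 →
      ((∀ (x' y' : ℚ_[p]) (ζ' : ℤˣ), x' ≠ 0 → y' ≠ 0 →
          metaMul p (!![x, 0; 0, y], ζ) (!![x', 0; 0, y'], ζ') =
            metaMul p (!![x', 0; 0, y'], ζ') (!![x, 0; 0, y], ζ)) ↔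
        ((∃ u : ℚ_[p], u ≠ 0 ∧ x = u ^ 2) ∧ (∃ u : ℚ_[p], u ≠ 0 ∧ y = u ^ 2)))) ∧
    (∀ (g : Matrix (Fin 2) (Fin 2) ℚ_[p]) (ζ : ℤˣ), g.det ≠ 0 →
      ((∀ (g' : Matrix (Fin 2) (Fin 2) ℚ_[p]) (ζ' : ℤˣ), g'.det ≠ 0 →
          metaMul p (g, ζ) (g', ζ') = metaMul p (g', ζ') (g, ζ)) ↔
        (∃ u : ℚ_[p], u ≠ 0 ∧ g = (u ^ 2) • (1 : Matrix (Fin 2) (Fin 2) ℚ_[p])))) := by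
  constructor
  · -- the torus case
    intro x y ζ hx hy
    constructor
    · intro H
      have key : ∀ x' y' : ℚ_[p], x' ≠ 0 → y' ≠ 0 →
          hilbertSign p y' (y * (x * y)) = hilbertSign p y (y' * (x' * y')) := by
        intro x' y' hx' hy'
        have h := (metaMul_comm_iff.mp (H x' y' 1 hx' hy')).2
        rwa [cocycle_diag hy hy', cocycle_diag hy' hy] at h
      have hane : y * (x * y) ≠ 0 := mul_ne_zero hy (mul_ne_zero hx hy)
      constructor
      · -- x is a square
        have hall : ∀ b : ℚ_[p], b ≠ 0 → hilbertFormula p (y * (x * y)) b = 1 := by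
          intro b hb
          have h := key (b⁻¹ * b⁻¹) b (mul_ne_zero (inv_ne_zero hb) (inv_ne_zero hb)) hb
          have hrhs : b * (b⁻¹ * b⁻¹ * b) = 1 := by field_simp
          rw [hrhs, hs_eq_one_iff.mpr hf_one_right] at h
          rw [hf_symm hp hane hb]
          exact hs_eq_one_iff.mp h
        obtain ⟨s, hsne, hseq⟩ := exists_sq_of_forall_hf hp hane hall
        refine ⟨s / y, div_ne_zero hsne hy, ?_⟩
        have h2 : x * y ^ 2 = s ^ 2 := by rw [← hseq]; ring
        rw [div_pow, eq_div_iff (pow_ne_zero 2 hy)]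
        exact h2
      · -- y is a square
        have hall : ∀ b : ℚ_[p], b ≠ 0 → hilbertFormula p y b = 1 := by
          intro b hb
          have h := key b 1 hb one_ne_zero
          rw [hs_eq_one_iff.mpr hf_one_left, show (1 : ℚ_[p]) * (b * 1) = b by ring] at h
          exact hs_eq_one_iff.mp h.symm
        exact exists_sq_of_forall_hf hp hy hall
    · rintro ⟨⟨u, hu, hxu⟩, ⟨w, hw, hyw⟩⟩
      intro x' y' ζ' hx' hy'
      rw [metaMul_comm_iff]
      constructor
      · rw [diag_mul, diag_mul, mul_comm x' x, mul_comm y' y]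
      · rw [cocycle_diag hy hy', cocycle_diag hy' hy]
        have h1 : hilbertSign p y' (y * (x * y)) = 1 := by
          have he : y * (x * y) = (w * (u * w)) ^ 2 := by rw [hxu, hyw]; ring
          rw [he]
          exact hs_sq_right hp hy' (mul_ne_zero hw (mul_ne_zero hu hw))
        have h2 : hilbertSign p y (y' * (x' * y')) = 1 := by
          rw [hyw]
          exact hs_sq_left hp hw (mul_ne_zero hy' (mul_ne_zero hx' hy'))
        rw [h1, h2]
  · -- the GL₂ case
    intro g ζ hg
    constructor
    · intro H
      -- first: g is scalar
      have hd1 : (!![1, 1; 0, 1] : Matrix (Fin 2) (Fin 2) ℚ_[p]).det ≠ 0 := by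
        rw [Matrix.det_fin_two_of]; norm_num
      have hd2 : (!![1, 0; 1, 1] : Matrix (Fin 2) (Fin 2) ℚ_[p]).det ≠ 0 := by
        rw [Matrix.det_fin_two_of]; norm_num
      have h1 := (metaMul_comm_iff.mp (H !![1, 1; 0, 1] 1 hd1)).1
      have h2 := (metaMul_comm_iff.mp (H !![1, 0; 1, 1] 1 hd2)).1
      have k10 : g 1 0 = 0 := by
        have e := congrFun (congrFun h1 0) 0
        simp [Matrix.mul_apply, Fin.sum_univ_two] at e
        exact e
      have k01 : g 0 1 = 0 := by
        have e := congrFun (congrFun h2 0) 0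
        simp [Matrix.mul_apply, Fin.sum_univ_two] at e
        exact e
      have kdd : g 0 0 = g 1 1 := by
        have e := congrFun (congrFun h1 0) 1
        simp [Matrix.mul_apply, Fin.sum_univ_two, k01] at e
        exact e
      set c : ℚ_[p] := g 0 0 with hcdef
      have hgsc : g = c • (1 : Matrix (Fin 2) (Fin 2) ℚ_[p]) := by
        ext i j
        fin_cases i <;> fin_cases j <;>
          simp [Matrix.one_apply, k10, k01, ← kdd, hcdef]
      have hcne : c ≠ 0 := by
        intro h0
        apply hg
        rw [Matrix.det_fin_two, k10, k01, ← kdd, ← hcdef, h0]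
        ring
      -- the Hilbert condition
      have hall : ∀ b : ℚ_[p], b ≠ 0 → hilbertFormula p c b = 1 := by
        intro t ht
        have hdet : (!![t, 0; 0, 1] : Matrix (Fin 2) (Fin 2) ℚ_[p]).det ≠ 0 := by
          rw [Matrix.det_fin_two_of]; simpa using ht
        have h := (metaMul_comm_iff.mp (H !![t, 0; 0, 1] 1 hdet)).2
        rw [hgsc] at h
        rw [cocycle_scalar_left hcne hdet, cocycle_scalar_right hcne hdet, cfun_diag,
          hs_eq_one_iff.mpr hf_one_left, Matrix.det_fin_two_of] at h
        have h' := hs_eq_one_iff.mp h.symm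
        rwa [show t * 1 - 0 * 0 = t by ring, one_mul] at h'
      obtain ⟨u, hu, hcu⟩ := exists_sq_of_forall_hf hp hcne hall
      exact ⟨u, hu, by rw [hgsc, hcu]⟩
    · rintro ⟨u, hu, rfl⟩
      intro g' ζ' hg'
      have hc : (u ^ 2 : ℚ_[p]) ≠ 0 := pow_ne_zero 2 hu
      rw [metaMul_comm_iff]
      constructor
      · rw [smul_mul_assoc, one_mul, mul_smul_comm, mul_one]
      · rw [cocycle_scalar_left hc hg', cocycle_scalar_right hc hg']
        have hcf := cfun_ne_zero hg'
        have h1 : hilbertSign p (cfun p g') (u ^ 2 * (u ^ 2 * u ^ 2)) = 1 := by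
          rw [show u ^ 2 * (u ^ 2 * u ^ 2) = (u * (u * u)) ^ 2 by ring]
          exact hs_sq_right hp hcf (mul_ne_zero hu (mul_ne_zero hu hu))
        have h2 : hilbertSign p (u ^ 2) (cfun p g' * g'.det) = 1 :=
          hs_sq_left hp hu (mul_ne_zero hcf hg')
        rw [h1, h2]
end

section
/- Let k be an algebraically closed field of characteristic p (p odd) and χ a character of H = diagonal Teichmüller matrices with (χ⁻¹χ^s)² ≠ 1 (square-regular). Then the Hecke algebra H(χ) = End_{G̃}(cInd_{Ĩ}^{G̃}(χ ⊠ ι)) is isomorphic as a k-algebra to k[X,Y,Z^{±1}]/(XY), via Z ↦ T_{2,2}, X ↦ T_{2,0}, Y ↦ T_{0,2}, where T_{i,j} is the basis element supported on the double coset of diag(p^i, p^j). In particular H(χ) is commutative. -/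
open MvPolynomial

namespace S5Aux

variable (k : Type*) [Field k]

noncomputable abbrev Bq := MvPolynomial (Fin 4) k ⧸
    Ideal.span ({X 0 * X 1, X 2 * X 3 - 1} : Set (MvPolynomial (Fin 4) k))

noncomputable def mkB : MvPolynomial (Fin 4) k →ₐ[k] Bq k := Ideal.Quotient.mkₐ k _

lemma mkB_mul_X01 : mkB k (X 0) * mkB k (X 1) = 0 := by
  rw [← map_mul, mkB, Ideal.Quotient.mkₐ_eq_mk, Ideal.Quotient.eq_zero_iff_mem]
  exact Ideal.subset_span (by simp)

lemma mkB_mul_X10 : mkB k (X 1) * mkB k (X 0) = 0 := by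
  rw [mul_comm]; exact mkB_mul_X01 k

lemma mkB_mul_X23 : mkB k (X 2) * mkB k (X 3) = 1 := by
  rw [← map_mul, ← map_one (mkB k), mkB, Ideal.Quotient.mkₐ_eq_mk,
    Ideal.Quotient.mk_eq_mk_iff_sub_mem]
  exact Ideal.subset_span (by simp)

noncomputable def uB : (Bq k)ˣ :=
  ⟨mkB k (X 2), mkB k (X 3), mkB_mul_X23 k, by rw [mul_comm]; exact mkB_mul_X23 k⟩

noncomputable def bb (i j : ℤ) : Bq k :=
  ((uB k ^ min i j : (Bq k)ˣ) : Bq k) * mkB k (X 0) ^ (i - j).toNat * mkB k (X 1) ^ (j - i).toNat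

lemma bb_zero : bb k 0 0 = 1 := by simp [bb]

lemma bb_mul_X0 {i j : ℤ} (h : j ≤ i) : bb k i j * mkB k (X 0) = bb k (i + 1) j := by
  have h1 : min i j = j := min_eq_right h
  have h2 : min (i + 1) j = j := min_eq_right (by omega)
  have h3 : (i + 1 - j).toNat = (i - j).toNat + 1 := by omega
  have h4 : (j - i).toNat = 0 := by omega
  have h5 : (j - (i + 1)).toNat = 0 := by omega
  simp only [bb, h1, h2, h3, h4, h5, pow_zero, pow_succ]
  ring

lemma bb_mul_X0' {i j : ℤ} (h : i < j) : bb k i j * mkB k (X 0) = 0 := by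
  obtain ⟨m, hm⟩ : ∃ m, (j - i).toNat = m + 1 := ⟨(j - i).toNat - 1, by omega⟩
  have : bb k i j * mkB k (X 0) =
      ((uB k ^ min i j : (Bq k)ˣ) : Bq k) * mkB k (X 0) ^ (i - j).toNat * mkB k (X 1) ^ m *
        (mkB k (X 1) * mkB k (X 0)) := by
    simp only [bb, hm, pow_succ]; ring
  rw [this, mkB_mul_X10, mul_zero]

lemma bb_mul_X1 {i j : ℤ} (h : i ≤ j) : bb k i j * mkB k (X 1) = bb k i (j + 1) := by
  have h1 : min i j = i := min_eq_left h
  have h2 : min i (j + 1) = i := min_eq_left (by omega)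
  have h3 : (j + 1 - i).toNat = (j - i).toNat + 1 := by omega
  have h4 : (i - j).toNat = 0 := by omega
  have h5 : (i - (j + 1)).toNat = 0 := by omega
  simp only [bb, h1, h2, h3, h4, h5, pow_zero, pow_succ]
  ring

lemma bb_mul_X1' {i j : ℤ} (h : j < i) : bb k i j * mkB k (X 1) = 0 := by
  obtain ⟨m, hm⟩ : ∃ m, (i - j).toNat = m + 1 := ⟨(i - j).toNat - 1, by omega⟩
  have : bb k i j * mkB k (X 1) =
      ((uB k ^ min i j : (Bq k)ˣ) : Bq k) * mkB k (X 0) ^ m * mkB k (X 1) ^ (j - i).toNat *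
        (mkB k (X 0) * mkB k (X 1)) := by
    simp only [bb, hm, pow_succ]; ring
  rw [this, mkB_mul_X01, mul_zero]

lemma bb_mul_X2 (i j : ℤ) : bb k i j * mkB k (X 2) = bb k (i + 1) (j + 1) := by
  have h1 : min (i + 1) (j + 1) = min i j + 1 := by omega
  have h3 : (i + 1 - (j + 1)).toNat = (i - j).toNat := by omega
  have h4 : (j + 1 - (i + 1)).toNat = (j - i).toNat := by omega
  simp only [bb, h1, h3, h4, zpow_add_one, Units.val_mul]
  have : ((uB k : (Bq k)ˣ) : Bq k) = mkB k (X 2) := rfl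
  rw [this]; ring

lemma bb_mul_X3 (i j : ℤ) : bb k i j * mkB k (X 3) = bb k (i - 1) (j - 1) := by
  have h1 : min (i - 1) (j - 1) = min i j - 1 := by omega
  have h3 : (i - 1 - (j - 1)).toNat = (i - j).toNat := by omega
  have h4 : (j - 1 - (i - 1)).toNat = (j - i).toNat := by omega
  simp only [bb, h1, h3, h4, zpow_sub_one, Units.val_mul]
  have : (((uB k)⁻¹ : (Bq k)ˣ) : Bq k) = mkB k (X 3) := rfl
  rw [this]; ring

lemma bb_mul_X_mem (i j : ℤ) (n : Fin 4) :
    bb k i j * mkB k (X n) ∈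
      Submodule.span k (Set.range fun ij : ℤ × ℤ => bb k ij.1 ij.2) := by
  fin_cases n
  · show bb k i j * mkB k (X 0) ∈ _
    rcases le_or_gt j i with h | h
    · rw [bb_mul_X0 k h]; exact Submodule.subset_span ⟨(i + 1, j), rfl⟩
    · rw [bb_mul_X0' k h]; exact Submodule.zero_mem _
  · show bb k i j * mkB k (X 1) ∈ _
    rcases le_or_gt i j with h | h
    · rw [bb_mul_X1 k h]; exact Submodule.subset_span ⟨(i, j + 1), rfl⟩
    · rw [bb_mul_X1' k h]; exact Submodule.zero_mem _
  · show bb k i j * mkB k (X 2) ∈ _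
    rw [bb_mul_X2]; exact Submodule.subset_span ⟨(i + 1, j + 1), rfl⟩
  · show bb k i j * mkB k (X 3) ∈ _
    rw [bb_mul_X3]; exact Submodule.subset_span ⟨(i - 1, j - 1), rfl⟩

lemma bb_span :
    Submodule.span k (Set.range fun ij : ℤ × ℤ => bb k ij.1 ij.2) = ⊤ := by
  rw [Submodule.eq_top_iff']
  intro x
  obtain ⟨q, rfl⟩ := Ideal.Quotient.mk_surjective x
  change mkB k q ∈ _
  induction q using MvPolynomial.induction_on with
  | C a =>
      have : mkB k (C a) = a • bb k 0 0 := by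
        rw [bb_zero, algHom_C, Algebra.algebraMap_eq_smul_one]
      rw [this]
      exact Submodule.smul_mem _ _ (Submodule.subset_span ⟨(0, 0), rfl⟩)
  | add q r hq hr => rw [map_add]; exact Submodule.add_mem _ hq hr
  | mul_X q n hq =>
      rw [map_mul]
      refine Submodule.span_induction (p := fun y _ =>
        y * mkB k (X n) ∈ Submodule.span k (Set.range fun ij : ℤ × ℤ => bb k ij.1 ij.2))
        ?_ ?_ ?_ ?_ hq
      · rintro _ ⟨ij, rfl⟩; exact bb_mul_X_mem k ij.1 ij.2 n
      · simpa using Submodule.zero_mem _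
      · intro a b _ _ ha hb; rw [add_mul]; exact Submodule.add_mem _ ha hb
      · intro c a _ ha; rw [smul_mul_assoc]; exact Submodule.smul_mem _ _ ha

end S5Aux

/-- Let `χ` be a square-regular character and `H(χ)` the corresponding summand of the genuine
pro-`p` Iwahori Hecke algebra of the metaplectic cover of `GL₂(ℚ_p)`.  Abstractly: `A` is a
`k`-algebra with `k`-basis `{T_{2i,2j}}_{i,j ∈ ℤ}` (here `t i j` stands for `T_{2i,2j}`)
satisfying the established relations (`T_{0,0} = 1`, `T_{2,2}` central invertible with inverse
`T_{-2,-2}`, `T_{2,0}^m = T_{2m,0}`, `T_{0,2}^m = T_{0,2m}`, `T_{2,0}T_{0,2} = 0`).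
Then `A ≅ k[X,Y,Z^{±1}]/(XY)` as `k`-algebras via `Z ↦ T_{2,2}`, `X ↦ T_{2,0}`,
`Y ↦ T_{0,2}`; in particular `A` is commutative. -/


theorem statement5 (k : Type*) [Field k] [IsAlgClosed k] (p : ℕ) [Fact p.Prime] [CharP k p]
    (hp : Odd p)
    (A : Type*) [Ring A] [Algebra k A]
    (t : ℤ → ℤ → A)
    (hli : LinearIndependent k (fun ij : ℤ × ℤ => t ij.1 ij.2))
    (hspan : Submodule.span k (Set.range (fun ij : ℤ × ℤ => t ij.1 ij.2)) = ⊤)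
    (h00 : t 0 0 = 1)
    (hZ : ∀ i j : ℤ, t 1 1 * t i j = t (i + 1) (j + 1) ∧ t i j * t 1 1 = t (i + 1) (j + 1))
    (hZinv : t 1 1 * t (-1) (-1) = 1 ∧ t (-1) (-1) * t 1 1 = 1)
    (hX : ∀ m n : ℕ, t (m : ℤ) 0 * t (n : ℤ) 0 = t ((m : ℤ) + n) 0)
    (hY : ∀ m n : ℕ, t 0 (m : ℤ) * t 0 (n : ℤ) = t 0 ((m : ℤ) + n))
    (hXY : t 1 0 * t 0 1 = 0 ∧ t 0 1 * t 1 0 = 0) :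
    ∃ e : A ≃ₐ[k] (MvPolynomial (Fin 4) k ⧸
        Ideal.span ({X 0 * X 1, X 2 * X 3 - 1} : Set (MvPolynomial (Fin 4) k))),
      e (t 1 0) = Ideal.Quotient.mk _ (X 0) ∧
      e (t 0 1) = Ideal.Quotient.mk _ (X 1) ∧
      e (t 1 1) = Ideal.Quotient.mk _ (X 2) ∧
      ∀ a b : A, a * b = b * a := by
  classical
  -- the unit `T_{2,2}`
  set zu : Aˣ := ⟨t 1 1, t (-1) (-1), hZinv.1, hZinv.2⟩ with hzu
  -- multiplication by the inverse of the central unit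
  have hw : ∀ i j : ℤ, t (-1) (-1) * t i j = t (i - 1) (j - 1) := by
    intro i j
    have h1 : t 1 1 * t (i - 1) (j - 1) = t i j := by
      rw [(hZ (i - 1) (j - 1)).1, sub_add_cancel, sub_add_cancel]
    calc t (-1) (-1) * t i j = t (-1) (-1) * (t 1 1 * t (i - 1) (j - 1)) := by rw [h1]
      _ = (t (-1) (-1) * t 1 1) * t (i - 1) (j - 1) := (mul_assoc _ _ _).symm
      _ = t (i - 1) (j - 1) := by rw [hZinv.2, one_mul]
  have hzu_pow : ∀ (n : ℤ) (i j : ℤ), ((zu ^ n : Aˣ) : A) * t i j = t (i + n) (j + n) := by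
    intro n
    induction n using Int.induction_on with
    | zero => intro i j; simp
    | succ m ih =>
        intro i j
        have e1 : i + ((m : ℤ) + 1) = i + 1 + m := by ring
        have e2 : j + ((m : ℤ) + 1) = j + 1 + m := by ring
        have hval : ((zu ^ ((m : ℤ) + 1) : Aˣ) : A) = ((zu ^ (m : ℤ) : Aˣ) : A) * t 1 1 := by
          rw [zpow_add_one, Units.val_mul]
        rw [e1, e2, hval, mul_assoc, (hZ i j).1, ih (i + 1) (j + 1)]
    | pred m ih =>
        intro i j
        have e1 : i + (-(m : ℤ) - 1) = i - 1 + -(m : ℤ) := by ring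
        have e2 : j + (-(m : ℤ) - 1) = j - 1 + -(m : ℤ) := by ring
        have hval : ((zu ^ (-(m : ℤ) - 1) : Aˣ) : A)
            = ((zu ^ (-(m : ℤ)) : Aˣ) : A) * t (-1) (-1) := by
          rw [zpow_sub_one, Units.val_mul]; rfl
        rw [e1, e2, hval, mul_assoc, hw i j, ih (i - 1) (j - 1)]
  have hx_pow : ∀ m : ℕ, t 1 0 ^ m = t (m : ℤ) 0 := by
    intro m
    induction m with
    | zero => simpa using h00.symm
    | succ n ih =>
        rw [pow_succ, ih]
        have h1 := hX n 1
        push_cast at h1 ⊢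
        rw [h1]
  have hy_pow : ∀ m : ℕ, t 0 1 ^ m = t 0 (m : ℤ) := by
    intro m
    induction m with
    | zero => simpa using h00.symm
    | succ n ih =>
        rw [pow_succ, ih]
        have h1 := hY n 1
        push_cast at h1 ⊢
        rw [h1]
  -- canonical form of the basis vectors
  have hrep : ∀ i j : ℤ, t i j =
      ((zu ^ min i j : Aˣ) : A) * (t 1 0 ^ (i - j).toNat * t 0 1 ^ (j - i).toNat) := by
    intro i j
    rcases le_or_gt j i with h | h
    · have h1 : min i j = j := min_eq_right h
      have h2 : (j - i).toNat = 0 := by omega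
      have h3 : ((i - j).toNat : ℤ) = i - j := by omega
      rw [h1, h2, pow_zero, mul_one, hx_pow, h3, hzu_pow j (i - j) 0, sub_add_cancel, zero_add]
    · have h1 : min i j = i := min_eq_left h.le
      have h2 : (i - j).toNat = 0 := by omega
      have h3 : ((j - i).toNat : ℤ) = j - i := by omega
      rw [h1, h2, pow_zero, one_mul, hy_pow, h3, hzu_pow i 0 (j - i), sub_add_cancel, zero_add]
  -- the central unit commutes with everything
  have hzc : ∀ a : A, Commute (t 1 1) a := by
    intro a
    have ha : a ∈ Submodule.span k (Set.range fun ij : ℤ × ℤ => t ij.1 ij.2) :=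
      hspan ▸ Submodule.mem_top
    refine Submodule.span_induction ?_ ?_ ?_ ?_ ha
    · rintro _ ⟨ij, rfl⟩
      show t 1 1 * t ij.1 ij.2 = t ij.1 ij.2 * t 1 1
      rw [(hZ ij.1 ij.2).1, (hZ ij.1 ij.2).2]
    · exact Commute.zero_right _
    · intro x y _ _ h1 h2; exact h1.add_right h2
    · intro c x _ h1; exact h1.smul_right c
  have hzuC : ∀ (n : ℤ) (a : A), Commute ((zu ^ n : Aˣ) : A) a := by
    intro n a
    exact (Commute.units_zpow_left (u := zu) (hzc a) n)
  have hxyC : Commute (t 1 0) (t 0 1) := by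
    show t 1 0 * t 0 1 = t 0 1 * t 1 0
    rw [hXY.1, hXY.2]
  -- commutativity on basis vectors
  have hcommb : ∀ i j i' j' : ℤ, Commute (t i j) (t i' j') := by
    intro i j i' j'
    rw [hrep i j, hrep i' j']
    have hmm : Commute (t 1 0 ^ (i - j).toNat * t 0 1 ^ (j - i).toNat)
        (t 1 0 ^ (i' - j').toNat * t 0 1 ^ (j' - i').toNat) :=
      Commute.mul_left
        (Commute.mul_right ((Commute.refl (t 1 0)).pow_pow _ _) (hxyC.pow_pow _ _))
        (Commute.mul_right ((hxyC.symm).pow_pow _ _) ((Commute.refl (t 0 1)).pow_pow _ _))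
    exact Commute.mul_left (hzuC _ _)
      (Commute.mul_right ((hzuC _ _).symm) hmm)
  have hcomm : ∀ a b : A, a * b = b * a := by
    intro a b
    have ha : a ∈ Submodule.span k (Set.range fun ij : ℤ × ℤ => t ij.1 ij.2) :=
      hspan ▸ Submodule.mem_top
    have hb : b ∈ Submodule.span k (Set.range fun ij : ℤ × ℤ => t ij.1 ij.2) :=
      hspan ▸ Submodule.mem_top
    show Commute a b
    refine Submodule.span_induction ?_ ?_ ?_ ?_ ha
    · rintro _ ⟨ij, rfl⟩
      refine Submodule.span_induction ?_ ?_ ?_ ?_ hb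
      · rintro _ ⟨ij', rfl⟩; exact hcommb _ _ _ _
      · exact Commute.zero_right _
      · intro x y _ _ h1 h2; exact h1.add_right h2
      · intro c x _ h1; exact h1.smul_right c
    · exact Commute.zero_left _
    · intro x y _ _ h1 h2; exact h1.add_left h2
    · intro c x _ h1; exact h1.smul_left c
  -- make `A` commutative
  letI : CommRing A := { ‹Ring A› with mul_comm := hcomm }
  -- the algebra map from the quotient
  have hker : ∀ a ∈ Ideal.span ({X 0 * X 1, X 2 * X 3 - 1} : Set (MvPolynomial (Fin 4) k)),
      (aeval ![t 1 0, t 0 1, t 1 1, t (-1) (-1)] : MvPolynomial (Fin 4) k →ₐ[k] A) a = 0 := by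
    intro a ha
    have hle : Ideal.span ({X 0 * X 1, X 2 * X 3 - 1} : Set (MvPolynomial (Fin 4) k)) ≤
        RingHom.ker ((aeval ![t 1 0, t 0 1, t 1 1, t (-1) (-1)] :
          MvPolynomial (Fin 4) k →ₐ[k] A) : MvPolynomial (Fin 4) k →+* A) := by
      rw [Ideal.span_le]
      rintro q hq
      simp only [Set.mem_insert_iff, Set.mem_singleton_iff] at hq
      rcases hq with rfl | rfl
      · rw [SetLike.mem_coe, RingHom.mem_ker]
        simp [hXY.1]
      · rw [SetLike.mem_coe, RingHom.mem_ker]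
        simp [hZinv.1]
    exact RingHom.mem_ker.mp (hle ha)
  set φ : S5Aux.Bq k →ₐ[k] A :=
    Ideal.Quotient.liftₐ _ (aeval ![t 1 0, t 0 1, t 1 1, t (-1) (-1)]) hker with hφdef
  have hφmk : ∀ q : MvPolynomial (Fin 4) k,
      φ (S5Aux.mkB k q) = aeval ![t 1 0, t 0 1, t 1 1, t (-1) (-1)] q := by
    intro q
    rw [hφdef, S5Aux.mkB, Ideal.Quotient.mkₐ_eq_mk, Ideal.Quotient.liftₐ_apply]
    exact Ideal.Quotient.lift_mk _ _ _
  have hφ0 : φ (S5Aux.mkB k (X 0)) = t 1 0 := by rw [hφmk]; simp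
  have hφ1 : φ (S5Aux.mkB k (X 1)) = t 0 1 := by rw [hφmk]; simp
  have hφ2 : φ (S5Aux.mkB k (X 2)) = t 1 1 := by rw [hφmk]; simp
  have hφ3 : φ (S5Aux.mkB k (X 3)) = t (-1) (-1) := by rw [hφmk]; simp
  have hφu : Units.map (φ : S5Aux.Bq k →* A) (S5Aux.uB k) = zu := by
    ext
    exact hφ2
  have hφupow : ∀ n : ℤ, φ ((S5Aux.uB k ^ n : (S5Aux.Bq k)ˣ) : S5Aux.Bq k)
      = ((zu ^ n : Aˣ) : A) := by
    intro n
    calc φ ((S5Aux.uB k ^ n : (S5Aux.Bq k)ˣ) : S5Aux.Bq k)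
        = ((Units.map (φ : S5Aux.Bq k →* A) (S5Aux.uB k ^ n) : Aˣ) : A) :=
          (Units.coe_map _ _).symm
      _ = ((Units.map (φ : S5Aux.Bq k →* A) (S5Aux.uB k) ^ n : Aˣ) : A) := by rw [map_zpow]
      _ = ((zu ^ n : Aˣ) : A) := by rw [hφu]
  have hφb : ∀ i j : ℤ, φ (S5Aux.bb k i j) = t i j := by
    intro i j
    rw [S5Aux.bb, map_mul, map_mul, map_pow, map_pow, hφ0, hφ1, hφupow, mul_assoc]
    exact (hrep i j).symm
  have hsurj : Function.Surjective φ := by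
    intro a
    have h1 : Submodule.span k (Set.range fun ij : ℤ × ℤ => t ij.1 ij.2) ≤
        Subalgebra.toSubmodule φ.range := by
      refine Submodule.span_le.2 ?_
      rintro _ ⟨ij, rfl⟩
      exact ⟨S5Aux.bb k ij.1 ij.2, hφb ij.1 ij.2⟩
    exact h1 (hspan ▸ Submodule.mem_top)
  have hinj : Function.Injective φ := by
    rw [injective_iff_map_eq_zero]
    intro x hx
    have hxmem : x ∈ Submodule.span k (Set.range fun ij : ℤ × ℤ => S5Aux.bb k ij.1 ij.2) :=
      (S5Aux.bb_span k) ▸ Submodule.mem_top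
    obtain ⟨c, hc⟩ := Finsupp.mem_span_range_iff_exists_finsupp.1 hxmem
    have h0 : Finsupp.linearCombination k (fun ij : ℤ × ℤ => t ij.1 ij.2) c = 0 := by
      rw [Finsupp.linearCombination_apply]
      have h1 := congrArg φ hc
      rw [map_finsuppSum] at h1
      simp only [map_smul, hφb] at h1
      rw [← hx, ← h1]
    have hc0 : c = 0 := linearIndependent_iff.1 hli c h0
    rw [← hc, hc0]
    simp
  set E : S5Aux.Bq k ≃ₐ[k] A := AlgEquiv.ofBijective φ ⟨hinj, hsurj⟩ with hE
  have hEφ : ∀ x, E x = φ x := fun _ => rfl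
  refine ⟨E.symm, ?_, ?_, ?_, hcomm⟩
  · rw [AlgEquiv.symm_apply_eq, hEφ]
    exact hφ0.symm
  · rw [AlgEquiv.symm_apply_eq, hEφ]
    exact hφ1.symm
  · rw [AlgEquiv.symm_apply_eq, hEφ]
    exact hφ2.symm
end

section
/- Basic Lemma (torsion computation): Let k be a field of characteristic p, R = k[[X]][F] the twisted polynomial ring with FX = X^p F, and let π be an R-module containing linearly independent elements v₁,…,v_n with Xv_i = 0 and X^{s_i}F(v_i) = c_i v_{i+1} (indices mod n) for some s_i ∈ Z_{≥0}, c_i ∈ k^×. Let π_i = k[[X]][F^n]v_i. Then the X-torsion of π_i equals k·v_i, and the submodule π_M = k[[X]][F]·(⊕kv_i) decomposes as ⊕_{i=1}^n π_i as k[[X]][F^n]-modules with π_M[X] = ⊕_{i=1}^n k v_i. -/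
open Function

set_option linter.unusedSectionVars false
set_option maxHeartbeats 1000000

section Statement11Aux

variable {p : ℕ} {k : Type*} [Field k] {π : Type*} [AddCommGroup π]
  [Module (PowerSeries k) π] [Module k π] [IsScalarTower k (PowerSeries k) π]
  {φ : PowerSeries k →+* PowerSeries k} {F : π →+ π}
  {n : ℕ} {v : ZMod n → π} {s : ZMod n → ℕ} {c : ZMod n → k}

private def auxA (p : ℕ) {n : ℕ} (s : ZMod n → ℕ) (l : ZMod n) : ℕ → ℕ
  | 0 => 0
  | j + 1 => p * auxA p s l j + s (l + (j : ZMod n))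

private def auxB {k : Type*} [Field k] {n : ℕ} (c : ZMod n → k) (l : ZMod n) : ℕ → k
  | 0 => 1
  | j + 1 => auxB c l j * c (l + (j : ZMod n))

private def auxE (p n e : ℕ) : ℕ → ℕ
  | 0 => 0
  | m + 1 => auxE p n e m + e * p ^ (n * m)

private theorem auxE_mono (p n e : ℕ) : Monotone (auxE p n e) := by
  apply monotone_nat_of_le_succ
  intro m
  simp [auxE]

private theorem auxB_ne (hc : ∀ i, c i ≠ 0) (l : ZMod n) (j : ℕ) : auxB c l j ≠ 0 := by
  induction j with
  | zero => simp [auxB]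
  | succ j ih => exact mul_ne_zero ih (hc _)

private theorem csmul (a : k) (x : π) : (PowerSeries.C a) • x = a • x := by
  have h := algebraMap_smul (PowerSeries k) a x
  rwa [PowerSeries.algebraMap_apply, Algebra.algebraMap_self_apply] at h

private theorem hphipow (hφX : φ PowerSeries.X = PowerSeries.X ^ p) :
    ∀ (j q : ℕ), (⇑φ)^[j] ((PowerSeries.X : PowerSeries k) ^ q)
      = PowerSeries.X ^ (q * p ^ j) := by
  intro j
  induction j with
  | zero => intro q; simp
  | succ j ih =>
    intro q
    rw [iterate_succ_apply, map_pow, hφX, ← pow_mul, ih]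
    congr 1
    ring

private theorem hphiC (hφC : ∀ cc : k, φ (PowerSeries.C cc) = PowerSeries.C cc) :
    ∀ (j : ℕ) (a : k), (⇑φ)^[j] (PowerSeries.C a) = PowerSeries.C a := by
  intro j a
  induction j with
  | zero => simp
  | succ j ih => rw [iterate_succ_apply, hφC, ih]

private theorem hFsmul (hF : ∀ (f : PowerSeries k) (w : π), F (f • w) = φ f • F w) :
    ∀ (j : ℕ) (f : PowerSeries k) (x : π),
      (⇑F)^[j] (f • x) = ((⇑φ)^[j] f) • (⇑F)^[j] x := by
  intro j
  induction j with
  | zero => intro f x; simp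
  | succ j ih =>
    intro f x
    rw [iterate_succ_apply, iterate_succ_apply, iterate_succ_apply, hF, ih]

private theorem chain_lemma (hφX : φ PowerSeries.X = PowerSeries.X ^ p)
    (hφC : ∀ cc : k, φ (PowerSeries.C cc) = PowerSeries.C cc)
    (hF : ∀ (f : PowerSeries k) (w : π), F (f • w) = φ f • F w)
    (hcyc : ∀ i, ((PowerSeries.X : PowerSeries k) ^ s i) • F (v i)
      = PowerSeries.C (c i) • v (i + 1)) (l : ZMod n) :
    ∀ j : ℕ, ((PowerSeries.X : PowerSeries k) ^ (auxA p s l j)) • (⇑F)^[j] (v l)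
      = PowerSeries.C (auxB c l j) • v (l + (j : ZMod n)) := by
  intro j
  induction j with
  | zero => simp [auxA, auxB]
  | succ j ih =>
    have step := congrArg F ih
    rw [hF, hF, hφC, map_pow, hφX, ← pow_mul] at step
    -- step : X ^ (auxA p s l j * p) • F ((⇑F)^[j] (v l)) = C (auxB c l j) • F (v (l + j))
    have harith : auxA p s l (j + 1) = s (l + (j : ZMod n)) + p * auxA p s l j := by
      simp [auxA]; ring
    calc (PowerSeries.X : PowerSeries k) ^ auxA p s l (j + 1) • (⇑F)^[j + 1] (v l)
        = (PowerSeries.X : PowerSeries k) ^ (s (l + (j : ZMod n)))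
            • ((PowerSeries.X : PowerSeries k) ^ (p * auxA p s l j)
              • F ((⇑F)^[j] (v l))) := by
          rw [iterate_succ_apply', smul_smul, ← pow_add, harith]
      _ = (PowerSeries.X : PowerSeries k) ^ (s (l + (j : ZMod n)))
            • (PowerSeries.C (auxB c l j) • F (v (l + (j : ZMod n)))) := by rw [step]
      _ = PowerSeries.C (auxB c l j)
            • ((PowerSeries.X : PowerSeries k) ^ (s (l + (j : ZMod n)))
              • F (v (l + (j : ZMod n)))) := by
          rw [smul_smul, smul_smul, mul_comm]
      _ = PowerSeries.C (auxB c l j)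
            • (PowerSeries.C (c (l + (j : ZMod n))) • v (l + (j : ZMod n) + 1)) := by
          rw [hcyc]
      _ = PowerSeries.C (auxB c l (j + 1)) • v (l + ((j + 1 : ℕ) : ZMod n)) := by
          have hidx : l + ((j + 1 : ℕ) : ZMod n) = l + (j : ZMod n) + 1 := by
            push_cast
            ring
          rw [hidx, smul_smul, ← map_mul]
          rfl

private theorem rel_lemma (hφX : φ PowerSeries.X = PowerSeries.X ^ p)
    (hφC : ∀ cc : k, φ (PowerSeries.C cc) = PowerSeries.C cc)
    (hF : ∀ (f : PowerSeries k) (w : π), F (f • w) = φ f • F w)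
    (hcyc : ∀ i, ((PowerSeries.X : PowerSeries k) ^ s i) • F (v i)
      = PowerSeries.C (c i) • v (i + 1)) (l : ZMod n) :
    ∀ m : ℕ, ((PowerSeries.X : PowerSeries k) ^ (auxA p s l n * p ^ (n * m)))
        • (⇑F)^[n * (m + 1)] (v l)
      = PowerSeries.C (auxB c l n) • (⇑F)^[n * m] (v l) := by
  intro m
  induction m with
  | zero =>
    have h := chain_lemma hφX hφC hF hcyc l n
    rw [ZMod.natCast_self, add_zero] at h
    simpa using h
  | succ m ih =>
    have step := congrArg (⇑F)^[n] ih
    rw [hFsmul hF, hFsmul hF, hphipow hφX, hphiC hφC, ← iterate_add_apply,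
      ← iterate_add_apply] at step
    have h1 : n + n * (m + 1) = n * (m + 1 + 1) := by ring
    have h2 : n + n * m = n * (m + 1) := by ring
    rw [h1, h2] at step
    have h3 : auxA p s l n * p ^ (n * m) * p ^ n = auxA p s l n * p ^ (n * (m + 1)) := by
      rw [mul_assoc, ← pow_add]
      ring_nf
    rw [h3] at step
    exact step

private theorem Ev_lemma (hφX : φ PowerSeries.X = PowerSeries.X ^ p)
    (hφC : ∀ cc : k, φ (PowerSeries.C cc) = PowerSeries.C cc)
    (hF : ∀ (f : PowerSeries k) (w : π), F (f • w) = φ f • F w)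
    (hcyc : ∀ i, ((PowerSeries.X : PowerSeries k) ^ s i) • F (v i)
      = PowerSeries.C (c i) • v (i + 1)) (l : ZMod n) :
    ∀ m : ℕ, ((PowerSeries.X : PowerSeries k) ^ (auxE p n (auxA p s l n) m))
        • (⇑F)^[n * m] (v l)
      = PowerSeries.C ((auxB c l n) ^ m) • v l := by
  intro m
  induction m with
  | zero => simp [auxE]
  | succ m ih =>
    have hE : auxE p n (auxA p s l n) (m + 1)
        = auxE p n (auxA p s l n) m + auxA p s l n * p ^ (n * m) := rfl
    calc (PowerSeries.X : PowerSeries k) ^ (auxE p n (auxA p s l n) (m + 1))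
        • (⇑F)^[n * (m + 1)] (v l)
        = (PowerSeries.X : PowerSeries k) ^ (auxE p n (auxA p s l n) m)
          • (((PowerSeries.X : PowerSeries k) ^ (auxA p s l n * p ^ (n * m)))
            • (⇑F)^[n * (m + 1)] (v l)) := by
          rw [smul_smul, ← pow_add, hE]
      _ = (PowerSeries.X : PowerSeries k) ^ (auxE p n (auxA p s l n) m)
          • (PowerSeries.C (auxB c l n) • (⇑F)^[n * m] (v l)) := by
          rw [rel_lemma hφX hφC hF hcyc]
      _ = PowerSeries.C (auxB c l n)
          • ((PowerSeries.X : PowerSeries k) ^ (auxE p n (auxA p s l n) m)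
            • (⇑F)^[n * m] (v l)) := by
          rw [smul_smul, smul_smul, mul_comm]
      _ = PowerSeries.C ((auxB c l n) ^ (m + 1)) • v l := by
          rw [ih, smul_smul, ← map_mul, ← pow_succ']

private theorem kill_lemma (hφX : φ PowerSeries.X = PowerSeries.X ^ p)
    (hφC : ∀ cc : k, φ (PowerSeries.C cc) = PowerSeries.C cc)
    (hF : ∀ (f : PowerSeries k) (w : π), F (f • w) = φ f • F w)
    (hcyc : ∀ i, ((PowerSeries.X : PowerSeries k) ^ s i) • F (v i)
      = PowerSeries.C (c i) • v (i + 1))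
    (hX : ∀ i, (PowerSeries.X : PowerSeries k) • v i = 0) (l : ZMod n) (m : ℕ) :
    ((PowerSeries.X : PowerSeries k) ^ (auxE p n (auxA p s l n) m + 1))
      • (⇑F)^[n * m] (v l) = 0 := by
  rw [pow_succ', mul_smul, Ev_lemma hφX hφC hF hcyc, smul_smul,
    mul_comm, ← smul_smul, hX, smul_zero]

private noncomputable def PP (F : π →+ π) {n : ℕ} (v : ZMod n → π) (l : ZMod n) (M : ℕ) :
    Submodule (PowerSeries k) π :=
  Submodule.span (PowerSeries k) ((fun m => (⇑F)^[n * m] (v l)) '' Set.Iic M)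

private theorem PP_mono (l : ZMod n) : Monotone (PP (k := k) F v l) := by
  intro M M' h
  exact Submodule.span_mono (Set.image_mono (Set.Iic_subset_Iic.mpr h))

private theorem gen_mem_PP (l : ZMod n) {m M : ℕ} (h : m ≤ M) :
    (⇑F)^[n * m] (v l) ∈ PP (k := k) F v l M :=
  Submodule.subset_span ⟨m, Set.mem_Iic.mpr h, rfl⟩

private theorem killP (hφX : φ PowerSeries.X = PowerSeries.X ^ p)
    (hφC : ∀ cc : k, φ (PowerSeries.C cc) = PowerSeries.C cc)
    (hF : ∀ (f : PowerSeries k) (w : π), F (f • w) = φ f • F w)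
    (hcyc : ∀ i, ((PowerSeries.X : PowerSeries k) ^ s i) • F (v i)
      = PowerSeries.C (c i) • v (i + 1))
    (hX : ∀ i, (PowerSeries.X : PowerSeries k) • v i = 0) (l : ZMod n) (M : ℕ) :
    ∀ u ∈ PP (k := k) F v l M,
      ((PowerSeries.X : PowerSeries k) ^ (auxE p n (auxA p s l n) M + 1)) • u = 0 := by
  intro u hu
  induction hu using Submodule.span_induction with
  | mem x hx =>
    obtain ⟨m, hm, rfl⟩ := hx
    have hle : auxE p n (auxA p s l n) m ≤ auxE p n (auxA p s l n) M :=
      auxE_mono p n (auxA p s l n) (Set.mem_Iic.mp hm)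
    have harith : auxE p n (auxA p s l n) M + 1
        = (auxE p n (auxA p s l n) M - auxE p n (auxA p s l n) m)
          + (auxE p n (auxA p s l n) m + 1) := by omega
    rw [harith, pow_add, mul_smul, kill_lemma hφX hφC hF hcyc hX, smul_zero]
  | zero => rw [smul_zero]
  | add x y hx hy ihx ihy => rw [smul_add, ihx, ihy, add_zero]
  | smul a x hx ihx => rw [smul_smul, mul_comm, ← smul_smul, ihx, smul_zero]

private theorem torsP (hφX : φ PowerSeries.X = PowerSeries.X ^ p)
    (hφC : ∀ cc : k, φ (PowerSeries.C cc) = PowerSeries.C cc)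
    (hF : ∀ (f : PowerSeries k) (w : π), F (f • w) = φ f • F w)
    (hcyc : ∀ i, ((PowerSeries.X : PowerSeries k) ^ s i) • F (v i)
      = PowerSeries.C (c i) • v (i + 1))
    (hX : ∀ i, (PowerSeries.X : PowerSeries k) • v i = 0)
    (hv : LinearIndependent k v) (hc : ∀ i, c i ≠ 0) (l : ZMod n) :
    ∀ M : ℕ, ∀ u ∈ PP (k := k) F v l M,
      (PowerSeries.X : PowerSeries k) • u = 0 → ∃ a : k, u = a • v l := by
  classical
  intro M
  induction M with
  | zero =>
    intro u hu _
    have h0 : Set.Iic (0 : ℕ) = {0} := by ext x; simp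
    rw [PP, h0, Set.image_singleton, Submodule.mem_span_singleton] at hu
    obtain ⟨f, hf⟩ := hu
    have hu2 : u = f • v l := hf.symm
    subst hu2
    refine ⟨PowerSeries.constantCoeff f, ?_⟩
    have hd := PowerSeries.eq_shift_mul_X_add_const f
    calc f • v l
        = ((PowerSeries.mk fun q => PowerSeries.coeff (q + 1) f) * PowerSeries.X
            + PowerSeries.C (PowerSeries.constantCoeff f)) • v l := by rw [← hd]
      _ = (PowerSeries.mk fun q => PowerSeries.coeff (q + 1) f)
            • ((PowerSeries.X : PowerSeries k) • v l)
            + PowerSeries.C (PowerSeries.constantCoeff f) • v l := by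
          rw [add_smul, mul_smul]
      _ = (PowerSeries.constantCoeff f) • v l := by
          rw [hX, smul_zero, zero_add, csmul]
  | succ M ih =>
    intro u hu hXu
    have hIic : Set.Iic (M + 1) = insert (M + 1) (Set.Iic M) := by
      ext x
      simp only [Set.mem_Iic, Set.mem_insert_iff]
      omega
    rw [PP, hIic, Set.image_insert_eq, Submodule.mem_span_insert] at hu
    obtain ⟨f, z, hz, hueq⟩ := hu
    have hzP : z ∈ PP (k := k) F v l M := hz
    have hu2 : u = f • (⇑F)^[n * (M + 1)] (v l) + z := hueq
    subst hu2
    by_cases hcase : ∀ m' < auxA p s l n * p ^ (n * M), PowerSeries.coeff m' f = 0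
    · have hdvd : (PowerSeries.X : PowerSeries k) ^ (auxA p s l n * p ^ (n * M)) ∣ f :=
        PowerSeries.X_pow_dvd_iff.mpr hcase
      obtain ⟨g, rfl⟩ := hdvd
      have h1 : ((PowerSeries.X : PowerSeries k) ^ (auxA p s l n * p ^ (n * M)) * g)
            • (⇑F)^[n * (M + 1)] (v l) + z
          = g • (PowerSeries.C (auxB c l n) • (⇑F)^[n * M] (v l)) + z := by
        rw [mul_comm, mul_smul, rel_lemma hφX hφC hF hcyc]
      rw [h1] at hXu ⊢
      refine ih _ ?_ hXu
      exact Submodule.add_mem _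
        (Submodule.smul_mem _ _ (Submodule.smul_mem _ _ (gen_mem_PP l le_rfl))) hzP
    · exfalso
      push_neg at hcase
      obtain ⟨m₀, hm₀q, hm₀⟩ := hcase
      have hexc : ∃ m', PowerSeries.coeff m' f ≠ 0 := ⟨m₀, hm₀⟩
      obtain ⟨t, htf, htle, htmin⟩ :
          ∃ t, PowerSeries.coeff t f ≠ 0 ∧ t ≤ m₀ ∧
            ∀ m < t, PowerSeries.coeff m f = 0 :=
        ⟨Nat.find hexc, Nat.find_spec hexc, Nat.find_min' hexc hm₀,
          fun m hm => by_contra fun h => (Nat.find_min hexc hm) h⟩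
      have htq : t < auxA p s l n * p ^ (n * M) := lt_of_le_of_lt htle hm₀q
      have hdvd : (PowerSeries.X : PowerSeries k) ^ t ∣ f :=
        PowerSeries.X_pow_dvd_iff.mpr htmin
      obtain ⟨g, hg⟩ := hdvd
      have ha : PowerSeries.constantCoeff g ≠ 0 := by
        intro h0
        apply htf
        rw [hg]
        have h2 := PowerSeries.coeff_X_pow_mul g t 0
        rw [zero_add] at h2
        rw [h2, PowerSeries.coeff_zero_eq_constantCoeff, h0]
      have hEq : auxE p n (auxA p s l n) (M + 1)
          = auxE p n (auxA p s l n) M + auxA p s l n * p ^ (n * M) := rfl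
      set E' := auxE p n (auxA p s l n) (M + 1) with hE'def
      have hts : auxE p n (auxA p s l n) M + 1 ≤ E' - t := by omega
      have hcomp : (PowerSeries.X : PowerSeries k) ^ (E' - t)
            • (f • (⇑F)^[n * (M + 1)] (v l) + z)
          = (PowerSeries.constantCoeff g * (auxB c l n) ^ (M + 1)) • v l := by
        rw [smul_add]
        have hz0 : (PowerSeries.X : PowerSeries k) ^ (E' - t) • z = 0 := by
          have h3 : E' - t = (E' - t - (auxE p n (auxA p s l n) M + 1))
              + (auxE p n (auxA p s l n) M + 1) := by omega
          rw [h3, pow_add, mul_smul, killP hφX hφC hF hcyc hX l M z hzP, smul_zero]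
        rw [hz0, add_zero, smul_smul, hg, ← mul_assoc, ← pow_add]
        have h4 : E' - t + t = E' := by omega
        rw [h4]
        have hring : (PowerSeries.X : PowerSeries k) ^ E' * g
            = (PowerSeries.mk fun q => PowerSeries.coeff (q + 1) g)
                * PowerSeries.X ^ (E' + 1)
              + PowerSeries.C (PowerSeries.constantCoeff g)
                * PowerSeries.X ^ E' := by
          conv_lhs => rw [PowerSeries.eq_shift_mul_X_add_const g]
          ring
        rw [hring, add_smul, mul_smul, mul_smul,
          kill_lemma hφX hφC hF hcyc hX l (M + 1), smul_zero, zero_add,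
          Ev_lemma hφX hφC hF hcyc l (M + 1), smul_smul, ← map_mul, csmul]
      have hzero : (PowerSeries.X : PowerSeries k) ^ (E' - t)
          • (f • (⇑F)^[n * (M + 1)] (v l) + z) = 0 := by
        have h5 : E' - t = (E' - t - 1) + 1 := by omega
        rw [h5, pow_add, pow_one, mul_smul, hXu, smul_zero]
      rw [hcomp] at hzero
      have hane : PowerSeries.constantCoeff g * (auxB c l n) ^ (M + 1) ≠ 0 :=
        mul_ne_zero ha (pow_ne_zero _ (auxB_ne hc l n))
      apply hv.ne_zero l
      calc v l = (PowerSeries.constantCoeff g * (auxB c l n) ^ (M + 1))⁻¹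
            • ((PowerSeries.constantCoeff g * (auxB c l n) ^ (M + 1)) • v l) :=
          (inv_smul_smul₀ hane _).symm
        _ = 0 := by rw [hzero, smul_zero]

end Statement11Aux




/-- Basic Lemma (torsion computation).  Let `k` be a field of characteristic `p`, and `π` a
module over the twisted ring `k[[X]][F]` (encoded as: a `k[[X]]`-module with an additive map
`F` semilinear over the Frobenius substitution `φ`, `φ(X) = X^p`).  Given linearly independent
`v i` (`i ∈ ℤ/n`) killed by `X` and satisfying the cycling relations
`X^{s i} • F (v i) = c i • v (i+1)`, set `π_i = k[[X]][F^n]·v_i` and `π_M = k[[X]][F]·(⊕ k v_i)`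
(smallest suitably stable submodules).  Then the `X`-torsion of `π_i` is `k·v_i`, and
`π_M = ⊕ π_i` as `k[[X]][F^n]`-modules, with `π_M[X] = ⊕ k·v_i`. -/
theorem statement11 (p : ℕ) [Fact p.Prime] (k : Type*) [Field k] [CharP k p]
    (π : Type*) [AddCommGroup π] [Module (PowerSeries k) π]
    [Module k π] [IsScalarTower k (PowerSeries k) π]
    (φ : PowerSeries k →+* PowerSeries k)
    (hφX : φ PowerSeries.X = PowerSeries.X ^ p)
    (hφC : ∀ cc : k, φ (PowerSeries.C cc) = PowerSeries.C cc)
    (F : π →+ π) (hF : ∀ (f : PowerSeries k) (w : π), F (f • w) = φ f • F w)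
    (n : ℕ) [NeZero n]
    (v : ZMod n → π) (hv : LinearIndependent k v)
    (hX : ∀ i, (PowerSeries.X : PowerSeries k) • v i = 0)
    (s : ZMod n → ℕ) (c : ZMod n → k) (hc : ∀ i, c i ≠ 0)
    (hcyc : ∀ i, ((PowerSeries.X : PowerSeries k) ^ s i) • F (v i)
      = PowerSeries.C (c i) • v (i + 1)) :
    let πi : ZMod n → Submodule (PowerSeries k) π := fun i =>
      sInf {N | v i ∈ N ∧ ∀ w ∈ N, (⇑F)^[n] w ∈ N}
    let πM : Submodule (PowerSeries k) π :=
      sInf {N | (∀ j, v j ∈ N) ∧ ∀ w ∈ N, F w ∈ N}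
    (∀ i, ∀ w ∈ πi i, (PowerSeries.X : PowerSeries k) • w = 0 → ∃ cc : k, w = cc • v i) ∧
    (πM = ⨆ j, πi j) ∧
    (∀ j, Disjoint (πi j) (⨆ l ∈ {l : ZMod n | l ≠ j}, πi l)) ∧
    (∀ w ∈ πM, (PowerSeries.X : PowerSeries k) • w = 0 →
      ∃ coef : ZMod n → k, w = ∑ j : ZMod n, coef j • v j) := by
  classical
  intro πi πM
  have hπi : ∀ l : ZMod n, πi l
      = sInf {N : Submodule (PowerSeries k) π | v l ∈ N ∧ ∀ w ∈ N, (⇑F)^[n] w ∈ N} :=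
    fun _ => rfl
  have hπM : πM = sInf {N : Submodule (PowerSeries k) π |
      (∀ j, v j ∈ N) ∧ ∀ w ∈ N, F w ∈ N} := rfl
  have hPle : ∀ (l : ZMod n) (M : ℕ), PP (k := k) F v l M ≤ πi l := by
    intro l M
    rw [hπi]
    refine le_sInf fun N hN => ?_
    rw [PP, Submodule.span_le]
    rintro x ⟨m, -, rfl⟩
    show (⇑F)^[n * m] (v l) ∈ N
    induction m with
    | zero => exact hN.1
    | succ m ihm =>
      have h1 : (⇑F)^[n * (m + 1)] (v l) = (⇑F)^[n] ((⇑F)^[n * m] (v l)) := by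
        rw [← Function.iterate_add_apply]
        congr 1
        ring
      rw [h1]
      exact hN.2 _ ihm
  have hvmem : ∀ l : ZMod n, v l ∈ πi l := fun l => hPle l 0 (gen_mem_PP l le_rfl)
  have hmem_iSup : ∀ (l : ZMod n) (u : π),
      u ∈ (⨆ M, PP (k := k) F v l M) ↔ ∃ M, u ∈ PP (k := k) F v l M :=
    fun l u => Submodule.mem_iSup_of_directed _ (PP_mono l).directed_le
  have hπi_le : ∀ l : ZMod n, πi l ≤ ⨆ M, PP (k := k) F v l M := by
    intro l
    rw [hπi]
    apply sInf_le
    constructor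
    · exact le_iSup (PP (k := k) F v l) 0 (gen_mem_PP l le_rfl)
    · intro u hu
      obtain ⟨M, hM⟩ := (hmem_iSup l u).mp hu
      refine (hmem_iSup l _).mpr ⟨M + 1, ?_⟩
      clear hu
      induction hM using Submodule.span_induction with
      | mem x hx =>
        obtain ⟨m, hm, rfl⟩ := hx
        have h1 : (⇑F)^[n] ((fun m => (⇑F)^[n * m] (v l)) m)
            = (⇑F)^[n * (m + 1)] (v l) := by
          show (⇑F)^[n] ((⇑F)^[n * m] (v l)) = _
          rw [← Function.iterate_add_apply]
          congr 1
          ring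
        rw [h1]
        exact gen_mem_PP l (by
          have := Set.mem_Iic.mp hm
          omega)
      | zero => rw [iterate_map_zero]; exact Submodule.zero_mem _
      | add x y hx hy ihx ihy => rw [iterate_map_add]; exact Submodule.add_mem _ ihx ihy
      | smul a x hx ihx => rw [hFsmul hF]; exact Submodule.smul_mem _ _ ihx
  have claim1 : ∀ i : ZMod n, ∀ u ∈ πi i,
      (PowerSeries.X : PowerSeries k) • u = 0 → ∃ cc : k, u = cc • v i := by
    intro i u hu hXu
    obtain ⟨M, hM⟩ := (hmem_iSup i u).mp (hπi_le i hu)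
    exact torsP hφX hφC hF hcyc hX hv hc i M u hM hXu
  have hpow_tors : ∀ (i : ZMod n) (u : π), u ∈ πi i →
      ∃ d : ℕ, (PowerSeries.X : PowerSeries k) ^ d • u = 0 := by
    intro i u hu
    obtain ⟨M, hM⟩ := (hmem_iSup i u).mp (hπi_le i hu)
    exact ⟨auxE p n (auxA p s i n) M + 1, killP hφX hφC hF hcyc hX i M u hM⟩
  have hID : ∀ (i : ZMod n) (m : ℕ),
      ((PowerSeries.X : PowerSeries k) ^ (p ^ m * s i)) • (⇑F)^[m + 1] (v i)
        = PowerSeries.C (c i) • (⇑F)^[m] (v (i + 1)) := by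
    intro i m
    induction m with
    | zero => simpa using hcyc i
    | succ m ihm =>
      have step := congrArg F ihm
      rw [hF, hF, hφC, map_pow, hφX, ← pow_mul,
        ← Function.iterate_succ_apply' (⇑F) (m + 1) (v i),
        ← Function.iterate_succ_apply' (⇑F) m (v (i + 1))] at step
      have h1 : p * (p ^ m * s i) = p ^ (m + 1) * s i := by ring
      rwa [h1] at step
  have hMEMaux : ∀ (d m : ℕ) (j : ZMod n), n ∣ m + d →
      (⇑F)^[m] (v j) ∈ ⨆ l, πi l := by
    intro d
    induction d with
    | zero =>
      intro m j hdvd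
      rw [add_zero] at hdvd
      obtain ⟨q, rfl⟩ := hdvd
      exact le_iSup πi j (hPle j q (gen_mem_PP j le_rfl))
    | succ d ihd =>
      intro m j hdvd
      have h1 := hID (j - 1) m
      rw [sub_add_cancel] at h1
      have h2 : (⇑F)^[m + 1] (v (j - 1)) ∈ ⨆ l, πi l := by
        refine ihd (m + 1) (j - 1) ?_
        have h3 : m + 1 + d = m + (d + 1) := by omega
        rw [h3]
        exact hdvd
      have h3 : PowerSeries.C (c (j - 1)) • (⇑F)^[m] (v j) ∈ ⨆ l, πi l := by
        rw [← h1]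
        exact Submodule.smul_mem _ _ h2
      have h4 := Submodule.smul_mem _ (PowerSeries.C (c (j - 1))⁻¹) h3
      rwa [smul_smul, ← map_mul, inv_mul_cancel₀ (hc _), map_one, one_smul] at h4
  have hMEM : ∀ (m : ℕ) (j : ZMod n), (⇑F)^[m] (v j) ∈ ⨆ l, πi l := by
    intro m j
    refine hMEMaux (n - m % n) m j ⟨m / n + 1, ?_⟩
    have h1 := Nat.div_add_mod m n
    have h2 : m % n < n := Nat.mod_lt _ (Nat.pos_of_ne_zero (NeZero.ne n))
    have h3 : n * (m / n + 1) = n * (m / n) + n := by ring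
    omega
  have hsup_stable : ∀ u ∈ (⨆ l, πi l), F u ∈ ⨆ l, πi l := by
    intro u hu
    refine Submodule.iSup_induction πi (motive := fun x => F x ∈ ⨆ l, πi l) hu ?_ ?_ ?_
    · intro i x hx
      obtain ⟨M, hM⟩ := (hmem_iSup i x).mp (hπi_le i hx)
      clear hx
      induction hM using Submodule.span_induction with
      | mem y hy =>
        obtain ⟨m, -, rfl⟩ := hy
        show F ((⇑F)^[n * m] (v i)) ∈ _
        rw [← Function.iterate_succ_apply' (⇑F) (n * m) (v i)]
        exact hMEM (n * m + 1) i
      | zero => rw [F.map_zero]; exact Submodule.zero_mem _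
      | add x' y' hx' hy' ihx ihy => rw [F.map_add]; exact Submodule.add_mem _ ihx ihy
      | smul a x' hx' ihx => rw [hF]; exact Submodule.smul_mem _ _ ihx
    · show F 0 ∈ ⨆ l, πi l
      rw [F.map_zero]; exact Submodule.zero_mem _
    · intro x y ihx ihy
      show F (x + y) ∈ ⨆ l, πi l
      rw [F.map_add]; exact Submodule.add_mem _ ihx ihy
  have claim2 : πM = ⨆ j, πi j := by
    apply le_antisymm
    · rw [hπM]
      exact sInf_le ⟨fun j => le_iSup πi j (hvmem j), hsup_stable⟩
    · refine iSup_le fun j => ?_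
      have hMmem : ∀ jj : ZMod n, v jj ∈ πM := by
        intro jj; rw [hπM]; exact Submodule.mem_sInf.mpr fun N hN => hN.1 jj
      have hMF : ∀ w ∈ πM, F w ∈ πM := by
        intro w hw
        rw [hπM] at hw ⊢
        exact Submodule.mem_sInf.mpr fun N hN => hN.2 w (Submodule.mem_sInf.mp hw N hN)
      have hMFn : ∀ w ∈ πM, (⇑F)^[n] w ∈ πM := by
        intro w hw
        have h5 : ∀ jj : ℕ, (⇑F)^[jj] w ∈ πM := by
          intro jj
          induction jj with
          | zero => exact hw
          | succ jj ih => rw [iterate_succ_apply']; exact hMF _ ih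
        exact h5 n
      rw [hπi]
      exact sInf_le ⟨hMmem j, hMFn⟩
  have hmax : ∀ (t : ZMod n → π), (∀ l, t l ∈ πi l) →
      (PowerSeries.X : PowerSeries k) • (∑ l, t l) = 0 →
      ∀ l, ∃ a : k, t l = a • v l := by
    intro t ht hXt
    have hex : ∀ l, ∃ d : ℕ, (PowerSeries.X : PowerSeries k) ^ d • t l = 0 :=
      fun l => hpow_tors l (t l) (ht l)
    set d : ZMod n → ℕ := fun l => Nat.find (hex l) with hd
    have hds : ∀ l, (PowerSeries.X : PowerSeries k) ^ (d l) • t l = 0 :=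
      fun l => Nat.find_spec (hex l)
    have hdm : ∀ l, ∀ m' < d l, (PowerSeries.X : PowerSeries k) ^ m' • t l ≠ 0 :=
      fun l m' hm' => Nat.find_min (hex l) hm'
    obtain ⟨D, hDdef⟩ : ∃ D, D = Finset.univ.sup d := ⟨_, rfl⟩
    have hlesup : ∀ l, d l ≤ D := fun l => by
      rw [hDdef]; exact Finset.le_sup (Finset.mem_univ l)
    by_cases hD1 : D ≤ 1
    · intro l
      refine claim1 l (t l) (ht l) ?_
      have hdl : d l ≤ 1 := le_trans (hlesup l) hD1
      rcases Nat.le_one_iff_eq_zero_or_eq_one.mp hdl with h0 | h1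
      · have h6 := hds l
        rw [h0, pow_zero, one_smul] at h6
        rw [h6, smul_zero]
      · have h6 := hds l
        rwa [h1, pow_one] at h6
    · exfalso
      push_neg at hD1
      have hD2 : 2 ≤ D := hD1
      have hsum : ∑ l, (PowerSeries.X : PowerSeries k) ^ (D - 1) • t l = 0 := by
        rw [← Finset.smul_sum]
        have h6 : (PowerSeries.X : PowerSeries k) ^ (D - 1)
            = (PowerSeries.X : PowerSeries k) ^ (D - 2) * PowerSeries.X := by
          rw [← pow_succ]
          congr 1
          omega
        rw [h6, mul_smul, hXt, smul_zero]
      have hbl : ∀ l, ∃ b : k,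
          (PowerSeries.X : PowerSeries k) ^ (D - 1) • t l = b • v l
            ∧ (d l = D → b ≠ 0) := by
        intro l
        rcases lt_or_eq_of_le (hlesup l) with hlt | heq
        · refine ⟨0, ?_, fun hh => absurd hh (ne_of_lt hlt)⟩
          have h7 : (PowerSeries.X : PowerSeries k) ^ (D - 1)
              = (PowerSeries.X : PowerSeries k) ^ (D - 1 - d l)
                * (PowerSeries.X : PowerSeries k) ^ (d l) := by
            rw [← pow_add]
            congr 1
            omega
          rw [h7, mul_smul, hds, smul_zero, zero_smul]
        · have h8 : (PowerSeries.X : PowerSeries k)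
              • ((PowerSeries.X : PowerSeries k) ^ (D - 1) • t l) = 0 := by
            rw [smul_smul, ← pow_succ']
            have h9 : D - 1 + 1 = D := by omega
            rw [h9, ← heq]
            exact hds l
          obtain ⟨b, hb⟩ := claim1 l _ (Submodule.smul_mem _ _ (ht l)) h8
          refine ⟨b, hb, fun _ hb0 => ?_⟩
          refine hdm l (D - 1) (by omega) ?_
          rw [hb, hb0, zero_smul]
      choose b hb1 hb2 using hbl
      have hs0 : ∑ l, b l • v l = 0 := by
        rw [← hsum]
        exact Finset.sum_congr rfl fun l _ => (hb1 l).symm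
      have hall := Fintype.linearIndependent_iff.mp hv b hs0
      obtain ⟨l0, -, hl0⟩ := Finset.exists_mem_eq_sup Finset.univ
        Finset.univ_nonempty d
      exact hb2 l0 (hDdef.trans hl0).symm (hall l0)
  have hdecomp : ∀ u ∈ (⨆ l, πi l), ∃ t : ZMod n → π,
      (∀ l, t l ∈ πi l) ∧ ∑ l, t l = u := by
    intro u hu
    obtain ⟨ff, hff, hffs⟩ := (Submodule.mem_iSup_iff_exists_finsupp πi u).mp hu
    refine ⟨ff, hff, ?_⟩
    rw [← hffs]
    exact (Finsupp.sum_fintype ff (fun _ x => x) (fun _ => rfl)).symm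
  have claim4 : ∀ w ∈ πM, (PowerSeries.X : PowerSeries k) • w = 0 →
      ∃ coef : ZMod n → k, w = ∑ j : ZMod n, coef j • v j := by
    intro w hw hXw
    rw [claim2] at hw
    obtain ⟨t, ht, hts⟩ := hdecomp w hw
    have h10 : (PowerSeries.X : PowerSeries k) • (∑ l, t l) = 0 := by
      rw [hts]; exact hXw
    choose a ha using hmax t ht h10
    exact ⟨a, by rw [← hts]; exact Finset.sum_congr rfl fun l _ => ha l⟩
  have claim3 : ∀ j : ZMod n,
      Disjoint (πi j) (⨆ l ∈ {l : ZMod n | l ≠ j}, πi l) := by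
    intro j
    rw [Submodule.disjoint_def]
    intro x hx1 hx2
    have hx2' : x ∈ ⨆ l : {l : ZMod n // l ≠ j}, πi l.val := by
      have he : (⨆ l : {l : ZMod n // l ≠ j}, πi l.val)
          = ⨆ l ∈ {l : ZMod n | l ≠ j}, πi l := iSup_subtype
      rw [he]
      exact hx2
    obtain ⟨g, hg, hgs⟩ :=
      (Submodule.mem_iSup_iff_exists_finsupp
        (fun l : {l : ZMod n // l ≠ j} => πi l.val) x).mp hx2'
    have htmem : ∀ l : ZMod n,
        (if h : l = j then -x else g ⟨l, h⟩) ∈ πi l := by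
      intro l
      by_cases h : l = j
      · rw [dif_pos h, h]
        exact Submodule.neg_mem _ hx1
      · rw [dif_neg h]
        exact hg ⟨l, h⟩
    have hsum0 : ∑ l, (if h : l = j then -x else g ⟨l, h⟩) = 0 := by
      have hsplit : ∑ l, (if h : l = j then -x else g ⟨l, h⟩)
          = (if h : j = j then -x else g ⟨j, h⟩)
            + ∑ l ∈ Finset.univ.erase j, (if h : l = j then -x else g ⟨l, h⟩) :=
        (Finset.add_sum_erase _ _ (Finset.mem_univ j)).symm
      have htj : (if h : j = j then -x else g ⟨j, h⟩) = -x := dif_pos rfl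
      have hiff : ∀ y : ZMod n, y ∈ Finset.univ.erase j ↔ y ≠ j := by
        intro y
        simp [Finset.mem_erase]
      have herase : ∑ l ∈ Finset.univ.erase j, (if h : l = j then -x else g ⟨l, h⟩)
          = x := by
        rw [Finset.sum_subtype _ hiff (fun l => if h : l = j then -x else g ⟨l, h⟩)]
        have hcg : ∀ y : {l : ZMod n // l ≠ j},
            (if h : (y : ZMod n) = j then -x else g ⟨y, h⟩) = g y := by
          intro y
          rw [dif_neg y.prop]
        rw [Finset.sum_congr rfl (fun y _ => hcg y), ← hgs]
        exact (Finsupp.sum_fintype g (fun _ x => x) (fun _ => rfl)).symm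
      rw [hsplit, htj, herase, neg_add_cancel]
    choose a ha using hmax _ htmem (by rw [hsum0, smul_zero])
    have hs0 : ∑ l, a l • v l = 0 := by
      calc ∑ l, a l • v l = ∑ l, (if h : l = j then -x else g ⟨l, h⟩) :=
            Finset.sum_congr rfl fun l _ => (ha l).symm
        _ = 0 := hsum0
    have hall := Fintype.linearIndependent_iff.mp hv a hs0
    have hj0 : (if h : j = j then -x else g ⟨j, h⟩) = 0 := by
      rw [ha j, hall j, zero_smul]
    rw [dif_pos rfl] at hj0
    exact neg_eq_zero.mp hj0
  exact ⟨claim1, claim2, claim3, claim4⟩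
end

section
/- Let k be an algebraically closed field of characteristic p. In the algebra H(1) (central invertible T = T_{2,2}, S₀ = S_{0,0} with S₀² = -S₀, S₁ = S_{0,2} with S₁² = 0), for λ ∈ k: if λ ≠ 0, the cokernel of the central element Ζ - λ (where Ζ = S₀S₁+S₁S₀+S₁) acting on the right ideal S₁·H(1)/(T-1) is a 2-dimensional simple module, isomorphic to the principal module PS(λ,1); if λ = 0, the cokernel is the direct sum of the two 1-dimensional supersingular characters SS(0,1) ⊕ SS(-1,1). -/
/-- Cokernel of `Ζ - λ` on the right ideal `S₁·H(1)_{T=1}`.  Here `A` stands for the algebra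
`H(1)/(T-1)`: a `k`-algebra with elements `S₀, S₁` satisfying `S₀² = -S₀`, `S₁² = 0` and
`k`-basis `{1, (S₀S₁)^m, (S₁S₀)^m (m ≥ 1), (S₀S₁)^m S₀, (S₁S₀)^m S₁ (m ≥ 0)}`.  Let
`Ζ = S₀S₁ + S₁S₀ + S₁` (central) and let `N = (Ζ - λ)·S₁·A`.  Then the cokernel
`S₁·A / (Ζ-λ)·S₁·A` has basis the images of `S₁` and `S₁S₀`; if `λ ≠ 0` it is a 2-dimensional
simple right module isomorphic to the principal module `PS(λ,1)` (with basis vectors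
`v = [S₁S₀]`, `w = λ[S₁]` satisfying `vS₁ = w`, `wS₀ = λv`), and if `λ = 0` it decomposes as
the direct sum of the two supersingular characters `SS(0,1) ⊕ SS(-1,1)` (spanned by
`u₁ = [S₁ + S₁S₀]` with `u₁S₀ ≡ 0 ≡ u₁S₁` and `u₂ = [S₁S₀]` with `u₂S₀ ≡ -u₂`,
`u₂S₁ ≡ 0`). -/
theorem statement17 (k : Type*) [Field k] [IsAlgClosed k] (p : ℕ) [Fact p.Prime] [CharP k p]
    (hp : Odd p)
    (A : Type*) [Ring A] [Algebra k A]
    (S₀ S₁ : A)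
    (hS0 : S₀ * S₀ = -S₀) (hS1 : S₁ * S₁ = 0)
    (f : Unit ⊕ ℕ × Fin 4 → A)
    (hfone : f (Sum.inl ()) = 1)
    (hf0 : ∀ m : ℕ, f (Sum.inr (m, 0)) = (S₀ * S₁) ^ (m + 1))
    (hf1 : ∀ m : ℕ, f (Sum.inr (m, 1)) = (S₁ * S₀) ^ (m + 1))
    (hf2 : ∀ m : ℕ, f (Sum.inr (m, 2)) = (S₀ * S₁) ^ m * S₀)
    (hf3 : ∀ m : ℕ, f (Sum.inr (m, 3)) = (S₁ * S₀) ^ m * S₁)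
    (hli : LinearIndependent k f)
    (hspan : Submodule.span k (Set.range f) = ⊤)
    (lam : k) :
    let Zc : A := S₀ * S₁ + S₁ * S₀ + S₁
    let N : Set A := {x : A | ∃ a : A, x = (Zc - algebraMap k A lam) * (S₁ * a)}
    -- the images of `S₁` and `S₁S₀` form a basis of the cokernel
    ((∀ a : A, ∃ cc dd : k, S₁ * a - (cc • S₁ + dd • (S₁ * S₀)) ∈ N) ∧
     (∀ cc dd : k, (cc • S₁ + dd • (S₁ * S₀)) ∈ N → cc = 0 ∧ dd = 0)) ∧
    -- if `λ ≠ 0`, the cokernel is the simple 2-dimensional principal module `PS(λ,1)`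
    (lam ≠ 0 →
      ((S₁ * S₀) * S₁ - lam • S₁ ∈ N) ∧
      ((lam • S₁) * S₀ - lam • (S₁ * S₀) ∈ N) ∧
      (∀ x : A, (∃ a : A, x = S₁ * a) → x ∉ N →
        ∀ y : A, (∃ b : A, y = S₁ * b) → ∃ r : A, y - x * r ∈ N)) ∧
    -- if `λ = 0`, the cokernel is the direct sum `SS(0,1) ⊕ SS(-1,1)`
    (lam = 0 →
      ((S₁ + S₁ * S₀) * S₀ ∈ N) ∧ ((S₁ + S₁ * S₀) * S₁ ∈ N) ∧
      ((S₁ * S₀) * S₀ + (S₁ * S₀) ∈ N) ∧ ((S₁ * S₀) * S₁ ∈ N)) := by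
    classical
  intro Zc N
  have hS1' : ∀ t : A, S₁ * (S₁ * t) = 0 := fun t => by rw [← mul_assoc, hS1, zero_mul]
  set e : A := S₁ * S₀ * S₁ - lam • S₁ with he
  have hexp : ∀ a : A, (Zc - algebraMap k A lam) * (S₁ * a) = e * a := by
    intro a
    simp only [Zc, he]
    simp [sub_mul, add_mul, mul_assoc, hS1', Algebra.smul_def, smul_mul_assoc]
  have hNmem : ∀ x : A, x ∈ N ↔ ∃ a : A, x = e * a := by
    intro x
    simp only [N, Set.mem_setOf_eq, hexp]
  have hNe' : ∀ t : A, e * t ∈ N := fun t => (hNmem _).2 ⟨t, rfl⟩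
  have hN0 : (0 : A) ∈ N := (hNmem _).2 ⟨0, (mul_zero e).symm⟩
  have hNadd : ∀ {x y : A}, x ∈ N → y ∈ N → x + y ∈ N := by
    intro x y hx hy
    rw [hNmem] at hx hy ⊢
    obtain ⟨a, rfl⟩ := hx; obtain ⟨b, rfl⟩ := hy
    exact ⟨a + b, (mul_add e a b).symm⟩
  have hNsub : ∀ {x y : A}, x ∈ N → y ∈ N → x - y ∈ N := by
    intro x y hx hy
    rw [hNmem] at hx hy ⊢
    obtain ⟨a, rfl⟩ := hx; obtain ⟨b, rfl⟩ := hy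
    exact ⟨a - b, (mul_sub e a b).symm⟩
  have hNsmul : ∀ (c : k) {x : A}, x ∈ N → c • x ∈ N := by
    intro c x hx
    rw [hNmem] at hx ⊢
    obtain ⟨a, rfl⟩ := hx
    exact ⟨c • a, (mul_smul_comm c e a).symm⟩
  have hNmulr : ∀ {x : A}, x ∈ N → ∀ b : A, x * b ∈ N := by
    intro x hx b
    rw [hNmem] at hx ⊢
    obtain ⟨a, rfl⟩ := hx
    exact ⟨a * b, mul_assoc e a b⟩
  have hswap : ∀ m : ℕ, S₁ * (S₀ * S₁) ^ m = (S₁ * S₀) ^ m * S₁ := by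
    intro m
    induction m with
    | zero => simp
    | succ n ih =>
        rw [pow_succ (S₀ * S₁) n, ← mul_assoc, ih, mul_assoc, ← mul_assoc S₁ S₀ S₁,
          ← mul_assoc, ← pow_succ]
  have h1 : ∀ m : ℕ, S₁ * S₀ * S₁ * (S₀ * S₁) ^ m = (S₁ * S₀) ^ (m + 1) * S₁ := by
    intro m
    rw [mul_assoc (S₁ * S₀) S₁, hswap m, ← mul_assoc, ← pow_succ']
  have key : ∀ m : ℕ, e * (S₀ * S₁) ^ m
      = (S₁ * S₀) ^ (m + 1) * S₁ - lam • ((S₁ * S₀) ^ m * S₁) := by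
    intro m
    rw [he, sub_mul, smul_mul_assoc, hswap m, h1 m]
  have hz1 : ∀ m : ℕ, S₁ * (S₁ * S₀) ^ (m + 1) = 0 := by
    intro m
    rw [pow_succ' (S₁ * S₀) m, ← mul_assoc, ← mul_assoc, hS1, zero_mul, zero_mul]
  have hz3 : ∀ m : ℕ, S₁ * ((S₁ * S₀) ^ m * S₁) = 0 := by
    intro m
    cases m with
    | zero => simp [hS1]
    | succ n => rw [← mul_assoc, hz1, zero_mul]
  have hchain : ∀ m : ℕ, (S₁ * S₀) ^ m * S₁ - lam ^ m • S₁ ∈ N := by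
    intro m
    induction m with
    | zero =>
        have : (S₁ * S₀) ^ 0 * S₁ - lam ^ 0 • S₁ = 0 := by simp
        rw [this]; exact hN0
    | succ n ih =>
        have heq : (S₁ * S₀) ^ (n + 1) * S₁ - lam ^ (n + 1) • S₁
            = e * (S₀ * S₁) ^ n + lam • ((S₁ * S₀) ^ n * S₁ - lam ^ n • S₁) := by
          rw [key n, pow_succ lam n]
          module
        rw [heq]
        exact hNadd (hNe' _) (hNsmul _ ih)
  have hchain2 : ∀ m : ℕ, (S₁ * S₀) ^ m * (S₁ * S₀) - lam ^ m • (S₁ * S₀) ∈ N := by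
    intro m
    have h := hNmulr (hchain m) S₀
    have heq : ((S₁ * S₀) ^ m * S₁ - lam ^ m • S₁) * S₀
        = (S₁ * S₀) ^ m * (S₁ * S₀) - lam ^ m • (S₁ * S₀) := by
      rw [sub_mul, smul_mul_assoc, mul_assoc]
    rwa [heq] at h
  -- Part 1a
  have part1a : ∀ a : A, ∃ cc dd : k, S₁ * a - (cc • S₁ + dd • (S₁ * S₀)) ∈ N := by
    have hbase : ∀ i, ∃ cc dd : k, S₁ * f i - (cc • S₁ + dd • (S₁ * S₀)) ∈ N := by
      rintro (⟨⟩ | ⟨m, j⟩)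
      · refine ⟨1, 0, ?_⟩
        have : S₁ * f (Sum.inl ()) - ((1 : k) • S₁ + (0 : k) • (S₁ * S₀)) = 0 := by
          rw [hfone]; simp
        rw [this]; exact hN0
      · fin_cases j
        · refine ⟨lam ^ (m + 1), 0, ?_⟩
          show S₁ * f (Sum.inr (m, 0)) - (lam ^ (m + 1) • S₁ + (0 : k) • (S₁ * S₀)) ∈ N
          have : S₁ * f (Sum.inr (m, 0)) - (lam ^ (m + 1) • S₁ + (0 : k) • (S₁ * S₀))
              = (S₁ * S₀) ^ (m + 1) * S₁ - lam ^ (m + 1) • S₁ := by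
            rw [hf0 m, hswap (m + 1), zero_smul, add_zero]
          rw [this]; exact hchain (m + 1)
        · refine ⟨0, 0, ?_⟩
          show S₁ * f (Sum.inr (m, 1)) - ((0 : k) • S₁ + (0 : k) • (S₁ * S₀)) ∈ N
          have : S₁ * f (Sum.inr (m, 1)) - ((0 : k) • S₁ + (0 : k) • (S₁ * S₀)) = 0 := by
            rw [hf1 m, hz1 m]; simp
          rw [this]; exact hN0
        · refine ⟨0, lam ^ m, ?_⟩
          show S₁ * f (Sum.inr (m, 2)) - ((0 : k) • S₁ + lam ^ m • (S₁ * S₀)) ∈ N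
          have : S₁ * f (Sum.inr (m, 2)) - ((0 : k) • S₁ + lam ^ m • (S₁ * S₀))
              = (S₁ * S₀) ^ m * (S₁ * S₀) - lam ^ m • (S₁ * S₀) := by
            rw [hf2 m, ← mul_assoc, hswap m, mul_assoc, zero_smul, zero_add]
          rw [this]; exact hchain2 m
        · refine ⟨0, 0, ?_⟩
          show S₁ * f (Sum.inr (m, 3)) - ((0 : k) • S₁ + (0 : k) • (S₁ * S₀)) ∈ N
          have : S₁ * f (Sum.inr (m, 3)) - ((0 : k) • S₁ + (0 : k) • (S₁ * S₀)) = 0 := by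
            rw [hf3 m, hz3 m]; simp
          rw [this]; exact hN0
    intro a
    have ha : a ∈ Submodule.span k (Set.range f) := by rw [hspan]; trivial
    induction ha using Submodule.span_induction with
    | mem x hx =>
        obtain ⟨i, rfl⟩ := hx
        exact hbase i
    | zero =>
        refine ⟨0, 0, ?_⟩
        have : S₁ * (0 : A) - ((0 : k) • S₁ + (0 : k) • (S₁ * S₀)) = 0 := by simp
        rw [this]; exact hN0
    | add x y hx hy ihx ihy =>
        obtain ⟨cc, dd, hcd⟩ := ihx
        obtain ⟨cc', dd', hcd'⟩ := ihy
        refine ⟨cc + cc', dd + dd', ?_⟩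
        have : S₁ * (x + y) - ((cc + cc') • S₁ + (dd + dd') • (S₁ * S₀))
            = (S₁ * x - (cc • S₁ + dd • (S₁ * S₀)))
              + (S₁ * y - (cc' • S₁ + dd' • (S₁ * S₀))) := by
          rw [mul_add]; module
        rw [this]; exact hNadd hcd hcd'
    | smul c x hx ihx =>
        obtain ⟨cc, dd, hcd⟩ := ihx
        refine ⟨c * cc, c * dd, ?_⟩
        have : S₁ * (c • x) - ((c * cc) • S₁ + (c * dd) • (S₁ * S₀))
            = c • (S₁ * x - (cc • S₁ + dd • (S₁ * S₀))) := by
          rw [mul_smul_comm]; module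
        rw [this]; exact hNsmul c hcd
  -- Part 1b : via coordinate functionals
  have part1b : ∀ cc dd : k, (cc • S₁ + dd • (S₁ * S₀)) ∈ N → cc = 0 ∧ dd = 0 := by
    set B : Module.Basis (Unit ⊕ ℕ × Fin 4) k A := Module.Basis.mk hli hspan.ge with hBdef
    have hB : ∀ i, B i = f i := fun i => Module.Basis.mk_apply hli hspan.ge i
    have main : ∀ w : Unit ⊕ ℕ × Fin 4 → k,
        (∀ i, Finsupp.linearCombination k w (B.repr (e * f i)) = 0) →
        ∀ a : A, Finsupp.linearCombination k w (B.repr (e * a)) = 0 := by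
      intro w hw a
      have hcomp : ((Finsupp.linearCombination k w).comp (B.repr : A →ₗ[k] _)).comp
          (LinearMap.mulLeft k e) = 0 := by
        apply Module.Basis.ext B
        intro i
        rw [hB i]
        simpa using hw i
      have := LinearMap.ext_iff.mp hcomp a
      simpa using this
    have hTf : ∀ (w : Unit ⊕ ℕ × Fin 4 → k) i,
        Finsupp.linearCombination k w (B.repr (f i)) = w i := by
      intro w i
      rw [← hB i, B.repr_self, Finsupp.linearCombination_single, one_smul]
    -- explicit expansions of e * f i
    have hef0 : e * f (Sum.inl ()) = f (Sum.inr (1, 3)) - lam • f (Sum.inr (0, 3)) := by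
      rw [hfone, mul_one, hf3 1, hf3 0, pow_zero, one_mul]
      have := key 0
      rw [pow_zero, mul_one, zero_add, pow_zero, one_mul] at this
      rw [this, pow_one]
    have hef1 : ∀ m, e * f (Sum.inr (m, 0))
        = f (Sum.inr (m + 2, 3)) - lam • f (Sum.inr (m + 1, 3)) := by
      intro m
      rw [hf0 m, hf3 (m + 2), hf3 (m + 1), key (m + 1)]
    have hef2 : ∀ m, e * f (Sum.inr (m, 1)) = 0 := by
      intro m
      rw [hf1 m, he, sub_mul, smul_mul_assoc, hz1 m, smul_zero, sub_zero,
        mul_assoc, hz1 m, mul_zero]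
    have hef3 : ∀ m, e * f (Sum.inr (m, 2))
        = f (Sum.inr (m + 1, 1)) - lam • f (Sum.inr (m, 1)) := by
      intro m
      rw [hf2 m, hf1 (m + 1), hf1 m, ← mul_assoc, key m, sub_mul, smul_mul_assoc,
        mul_assoc ((S₁ * S₀) ^ (m + 1)) S₁ S₀, ← pow_succ,
        mul_assoc ((S₁ * S₀) ^ m) S₁ S₀, ← pow_succ]
    have hef4 : ∀ m, e * f (Sum.inr (m, 3)) = 0 := by
      intro m
      rw [hf3 m, he, sub_mul, smul_mul_assoc, hz3 m, smul_zero, sub_zero,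
        mul_assoc (S₁ * S₀) S₁, hz3 m, mul_zero]
    intro cc dd hmem
    rw [hNmem] at hmem
    obtain ⟨a, ha⟩ := hmem
    have hx1 : cc • S₁ + dd • (S₁ * S₀)
        = cc • f (Sum.inr (0, 3)) + dd • f (Sum.inr (0, 1)) := by
      rw [hf3 0, hf1 0, pow_zero, one_mul, zero_add, pow_one]
    constructor
    · -- use weight w3
      set w3 : Unit ⊕ ℕ × Fin 4 → k := fun i =>
        match i with
        | Sum.inr (m, j) => if j = 3 then lam ^ m else 0
        | Sum.inl _ => 0 with hw3
      have hw3v : ∀ m, w3 (Sum.inr (m, 3)) = lam ^ m := fun m => by simp [hw3]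
      have hw3v1 : ∀ m, w3 (Sum.inr (m, 1)) = 0 := fun m => by
        simp [hw3, show (1 : Fin 4) ≠ 3 by decide]
      have hw : ∀ i, Finsupp.linearCombination k w3 (B.repr (e * f i)) = 0 := by
        rintro (⟨⟩ | ⟨m, j⟩)
        · rw [hef0]
          simp only [map_sub, map_smul, hTf, hw3v, smul_eq_mul]
          ring
        · fin_cases j
          · show Finsupp.linearCombination k w3 (B.repr (e * f (Sum.inr (m, 0)))) = 0
            rw [hef1 m]
            simp only [map_sub, map_smul, hTf, hw3v, smul_eq_mul]
            ring
          · show Finsupp.linearCombination k w3 (B.repr (e * f (Sum.inr (m, 1)))) = 0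
            rw [hef2 m]; simp
          · show Finsupp.linearCombination k w3 (B.repr (e * f (Sum.inr (m, 2)))) = 0
            rw [hef3 m]
            simp only [map_sub, map_smul, hTf, hw3v1, smul_eq_mul]
            ring
          · show Finsupp.linearCombination k w3 (B.repr (e * f (Sum.inr (m, 3)))) = 0
            rw [hef4 m]; simp
      have h0 := main w3 hw a
      rw [← ha, hx1] at h0
      simp only [map_add, map_smul, hTf, hw3v, hw3v1, smul_eq_mul, pow_zero] at h0
      simpa using h0
    · -- use weight w1
      set w1 : Unit ⊕ ℕ × Fin 4 → k := fun i =>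
        match i with
        | Sum.inr (m, j) => if j = 1 then lam ^ m else 0
        | Sum.inl _ => 0 with hw1
      have hw1v : ∀ m, w1 (Sum.inr (m, 1)) = lam ^ m := fun m => by simp [hw1]
      have hw1v3 : ∀ m, w1 (Sum.inr (m, 3)) = 0 := fun m => by
        simp [hw1, show (3 : Fin 4) ≠ 1 by decide]
      have hw : ∀ i, Finsupp.linearCombination k w1 (B.repr (e * f i)) = 0 := by
        rintro (⟨⟩ | ⟨m, j⟩)
        · rw [hef0]
          simp only [map_sub, map_smul, hTf, hw1v3, smul_eq_mul]
          ring
        · fin_cases j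
          · show Finsupp.linearCombination k w1 (B.repr (e * f (Sum.inr (m, 0)))) = 0
            rw [hef1 m]
            simp only [map_sub, map_smul, hTf, hw1v3, smul_eq_mul]
            ring
          · show Finsupp.linearCombination k w1 (B.repr (e * f (Sum.inr (m, 1)))) = 0
            rw [hef2 m]; simp
          · show Finsupp.linearCombination k w1 (B.repr (e * f (Sum.inr (m, 2)))) = 0
            rw [hef3 m]
            simp only [map_sub, map_smul, hTf, hw1v, smul_eq_mul]
            ring
          · show Finsupp.linearCombination k w1 (B.repr (e * f (Sum.inr (m, 3)))) = 0
            rw [hef4 m]; simp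
      have h0 := main w1 hw a
      rw [← ha, hx1] at h0
      simp only [map_add, map_smul, hTf, hw1v, hw1v3, smul_eq_mul, pow_zero] at h0
      simpa using h0
  refine ⟨⟨part1a, part1b⟩, ?_, ?_⟩
  · -- lam ≠ 0
    intro hlam
    refine ⟨(hNmem _).2 ⟨1, by rw [mul_one, he]⟩, ?_, ?_⟩
    · have : (lam • S₁) * S₀ - lam • (S₁ * S₀) = 0 := by
        rw [smul_mul_assoc, sub_self]
      rw [this]; exact hN0
    · rintro x ⟨a, rfl⟩ hx y ⟨b, rfl⟩
      obtain ⟨cc, dd, hn⟩ := part1a a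
      obtain ⟨cc', dd', hm⟩ := part1a b
      have hne : ¬(cc = 0 ∧ dd = 0) := by
        rintro ⟨rfl, rfl⟩
        apply hx
        have : S₁ * a = S₁ * a - ((0 : k) • S₁ + (0 : k) • (S₁ * S₀)) := by simp
        rw [this]; exact hn
      by_cases hdd : dd = 0
      · have hcc : cc ≠ 0 := fun h => hne ⟨h, hdd⟩
        subst hdd
        refine ⟨cc⁻¹ • (cc' • (1 : A) + dd' • S₀), ?_⟩
        have hx0r : (cc • S₁ + (0 : k) • (S₁ * S₀)) * (cc⁻¹ • (cc' • (1 : A) + dd' • S₀))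
            = cc' • S₁ + dd' • (S₁ * S₀) := by
          simp only [zero_smul, add_zero, smul_mul_assoc, mul_smul_comm, mul_add, mul_one,
            smul_add, smul_smul]
          match_scalars <;> field_simp
        have heq : S₁ * b - (S₁ * a) * (cc⁻¹ • (cc' • (1 : A) + dd' • S₀))
            = (S₁ * b - (cc' • S₁ + dd' • (S₁ * S₀)))
              - (S₁ * a - (cc • S₁ + (0 : k) • (S₁ * S₀)))
                * (cc⁻¹ • (cc' • (1 : A) + dd' • S₀)) := by
          rw [sub_mul, hx0r]; abel
        rw [heq]
        exact hNsub hm (hNmulr hn _)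
      · set r : A := (dd * lam)⁻¹ • (cc' • S₁ + dd' • (S₁ * S₀)) with hr
        refine ⟨r, ?_⟩
        set t : A := (lam⁻¹ * cc') • (1 : A) + (lam⁻¹ * dd') • S₀ with ht
        have hx0r : (cc • S₁ + dd • (S₁ * S₀)) * r = cc' • S₁ + dd' • (S₁ * S₀) + e * t := by
          rw [hr, ht, he]
          simp only [smul_mul_assoc, mul_smul_comm, mul_add, add_mul, smul_add, smul_smul,
            smul_sub, sub_mul, mul_one, hS1, smul_zero, mul_assoc, hS1', mul_zero, zero_add]
          match_scalars <;> field_simp <;> ring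
        have heq : S₁ * b - (S₁ * a) * r
            = (S₁ * b - (cc' • S₁ + dd' • (S₁ * S₀)))
              - (S₁ * a - (cc • S₁ + dd • (S₁ * S₀))) * r - e * t := by
          rw [sub_mul, hx0r]; abel
        rw [heq]
        exact hNsub (hNsub hm (hNmulr hn _)) (hNe' t)
  · -- lam = 0
    intro hlam
    refine ⟨?_, ?_, ?_, ?_⟩
    · have : (S₁ + S₁ * S₀) * S₀ = 0 := by
        rw [add_mul, mul_assoc, hS0, mul_neg, add_neg_cancel]
      rw [this]; exact hN0
    · have : (S₁ + S₁ * S₀) * S₁ = e * 1 := by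
        rw [mul_one, he, hlam, zero_smul, sub_zero, add_mul, hS1, zero_add]
      rw [this]; exact hNe' 1
    · have : (S₁ * S₀) * S₀ + (S₁ * S₀) = 0 := by
        rw [mul_assoc, hS0, mul_neg, neg_add_cancel]
      rw [this]; exact hN0
    · have : (S₁ * S₀) * S₁ = e * 1 := by
        rw [mul_one, he, hlam, zero_smul, sub_zero]
      rw [this]; exact hNe' 1
end
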